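/- arXiv:2405.08501 — 3 statements merged into one kernel-verified Lean document; each statement's English description precedes it below -/
import Mathlib

section
/- Let R be a discrete valuation ring with valuation v in which 2 is a unit, let f(x) = x² − ax − b ∈ R[x] be monic irreducible over the fraction field K, and let θ be the class of x in R[θ] := R[x]/(f). Then the set of equivalence classes of nonzero ideals of R[θ] is finite of cardinality ⌊½v(a²/4 + b)⌋ + 1. -/
set_option linter.unusedSectionVars false
set_option linter.unusedVariables false
set_option linter.unnecessarySimpa false
set_option maxHeartbeats 1600000

open Polynomial Ideal

section Abstract

variable {R A : Type*} [CommRing R] [IsDomain R] [IsDiscreteValuationRing R]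
  [CommRing A] [IsDomain A]
  {π : R} (hπ : Irreducible π) (h2 : IsUnit (2 : R))
  (ι : R →+* A) (θ : A) (d : R) (hθ : θ ^ 2 = ι d)
  (hrep : ∀ z : A, ∃ x y : R, z = ι x + ι y * θ)
  (hind : ∀ x y : R, ι x + ι y * θ = 0 → x = 0 ∧ y = 0)
  (m : ℕ) (ud : R) (hud : IsUnit ud) (hd : d = π ^ m * ud)

include hind in
lemma coords_eq {x y x' y' : R} (h : ι x + ι y * θ = ι x' + ι y' * θ) :
    x = x' ∧ y = y' := by
  have h0 : ι (x - x') + ι (y - y') * θ = 0 := by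
    simp only [map_sub]; linear_combination h
  obtain ⟨h1, h2⟩ := hind _ _ h0
  constructor <;> [exact sub_eq_zero.mp h1; exact sub_eq_zero.mp h2]

include hind in
lemma iota_inj : Function.Injective ι := by
  intro x y h
  have := (coords_eq ι θ hind (x := x) (y := 0) (x' := y) (y' := 0) (by rw [h])).1
  exact this

include hind in
lemma theta_ne : θ ≠ 0 := by
  intro h
  have : ι 0 + ι 1 * θ = 0 := by simp [h]
  simpa using (hind 0 1 this).2

include hθ hind in
lemma d_ne : d ≠ 0 := by
  intro h
  have : θ ^ 2 = 0 := by rw [hθ, h, map_zero]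
  exact theta_ne ι θ hind (pow_eq_zero_iff (n := 2) (by norm_num) |>.mp this)


include hθ in
lemma mulco' (x y x' y' : R) :
    (ι x + ι y * θ) * (ι x' + ι y' * θ)
      = ι (x * x' + d * (y * y')) + ι (x * y' + y * x') * θ := by
  simp only [map_add, _root_.map_mul]
  linear_combination (ι y * ι y') * hθ

lemma span_singleton_mul_span_pair (a b c : A) :
    span {a} * span ({b, c} : Set A) = span ({a * b, a * c} : Set A) := by
  rw [span_insert, Ideal.mul_sup, span_singleton_mul_span_singleton,
    span_singleton_mul_span_singleton, ← span_insert]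

include hθ hrep in
lemma mem_st (s t : R) {z : A} :
    z ∈ span ({ι s, ι t * θ} : Set A) ↔
      ∃ x1 x2 y1 y2 : R, z = ι (s * x1 + t * d * x2) + ι (s * y1 + t * y2) * θ := by
  constructor
  · intro hz
    obtain ⟨a, b, hab⟩ := mem_span_pair.mp hz
    obtain ⟨a1, a2, ha⟩ := hrep a
    obtain ⟨b1, b2, hb⟩ := hrep b
    refine ⟨a1, b2, a2, b1, ?_⟩
    have e1 : a * ι s = ι (a1 * s + d * (a2 * 0)) + ι (a1 * 0 + a2 * s) * θ := by
      rw [ha]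
      have := mulco' ι θ d hθ a1 a2 s 0
      simpa using this
    have e2 : b * (ι t * θ) = ι (b1 * 0 + d * (b2 * t)) + ι (b1 * t + b2 * 0) * θ := by
      rw [hb]
      have := mulco' ι θ d hθ b1 b2 0 t
      rw [← this]; ring_nf; rw [map_zero]; ring
    rw [← hab, e1, e2]
    simp only [map_add, _root_.map_mul, map_zero]
    ring
  · rintro ⟨x1, x2, y1, y2, rfl⟩
    apply mem_span_pair.mpr
    refine ⟨ι x1 + ι y1 * θ, ι y2 + ι x2 * θ, ?_⟩
    have e1 := mulco' ι θ d hθ x1 y1 s 0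
    have e2 := mulco' ι θ d hθ y2 x2 0 t
    rw [show ι s = ι s + ι 0 * θ by simp, show ι t * θ = ι 0 + ι t * θ by simp,
      e1, e2]
    simp only [map_add, _root_.map_mul, map_zero]
    ring

include hθ hrep in
lemma mem_I {j : ℕ} (hdj : π ^ j ∣ d) {z : A} :
    z ∈ span ({ι (π ^ j), θ} : Set A) ↔ ∃ x y : R, z = ι (π ^ j * x) + ι y * θ := by
  obtain ⟨d', hd'⟩ := hdj
  have : ({ι (π ^ j), θ} : Set A) = {ι (π ^ j), ι 1 * θ} := by rw [map_one, one_mul]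
  rw [this, mem_st ι θ d hθ hrep]
  constructor
  · rintro ⟨x1, x2, y1, y2, rfl⟩
    exact ⟨x1 + d' * x2, π ^ j * y1 + y2, by rw [hd']; ring_nf⟩
  · rintro ⟨x, y, rfl⟩
    exact ⟨x, 0, 0, y, by ring_nf⟩

include hθ hrep in
lemma mem_sc {j k : ℕ} (hdk : π ^ k ∣ d) {z : A} :
    z ∈ span ({ι (π ^ (j + k)), ι (π ^ j) * θ} : Set A) ↔
      ∃ x y : R, z = ι (π ^ (j + k) * x) + ι (π ^ j * y) * θ := by
  obtain ⟨d', hd'⟩ := hdk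
  rw [mem_st ι θ d hθ hrep]
  constructor
  · rintro ⟨x1, x2, y1, y2, rfl⟩
    exact ⟨x1 + d' * x2, π ^ k * y1 + y2, by rw [hd']; ring_nf⟩
  · rintro ⟨x, y, rfl⟩
    exact ⟨x, 0, π ^ k * x * 0, y, by ring_nf⟩



lemma span_cancel {α : A} (hα : α ≠ 0) {I J : Ideal A} :
    span {α} * I ≤ span {α} * J ↔ I ≤ J := by
  constructor
  · intro h x hx
    have hm : α * x ∈ span {α} * J :=
      h (Ideal.mul_mem_mul (mem_span_singleton_self α) hx)
    obtain ⟨z, hz, hzx⟩ := Ideal.mem_span_singleton_mul.mp hm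
    rwa [← mul_left_cancel₀ hα hzx]
  · intro h
    exact Ideal.mul_mono_right h

include hπ hθ hud hd hrep hind in
lemma Q_iff (j k : ℕ) (hkm : k ≤ m) :
    (span {θ} * span ({ι (π ^ k), θ} : Set A)
      ≤ span {ι (π ^ j)} * span ({ι (π ^ k), θ} : Set A)) ↔ j ≤ k ∧ j + k ≤ m := by
  have hdk : π ^ k ∣ d := by rw [hd]; exact Dvd.dvd.mul_right (pow_dvd_pow π hkm) ud
  have hrhs : span {ι (π ^ j)} * span ({ι (π ^ k), θ} : Set A)
      = span ({ι (π ^ (j + k)), ι (π ^ j) * θ} : Set A) := by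
    rw [span_singleton_mul_span_pair, ← _root_.map_mul, ← pow_add]
  constructor
  · intro h
    rw [hrhs] at h
    constructor
    · have h1 : θ * ι (π ^ k) ∈ span {ι (π ^ j)} * span ({ι (π ^ k), θ} : Set A) := by
        rw [hrhs]
        exact h (Ideal.mul_mem_mul (mem_span_singleton_self θ)
          (subset_span (by simp)))
      rw [hrhs] at h1
      obtain ⟨x, y, hxy⟩ := (mem_sc ι θ d hθ hrep hdk).mp h1
      have : ι 0 + ι (π ^ k) * θ = ι (π ^ (j + k) * x) + ι (π ^ j * y) * θ := by
        rw [← hxy]; simp [mul_comm]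
      obtain ⟨-, h3⟩ := coords_eq ι θ hind this
      have : π ^ j ∣ π ^ k := ⟨y, h3⟩
      exact (pow_dvd_pow_iff hπ.ne_zero hπ.not_isUnit).mp this
    · have h1 : θ * θ ∈ span ({ι (π ^ (j + k)), ι (π ^ j) * θ} : Set A) :=
        h (Ideal.mul_mem_mul (mem_span_singleton_self θ) (subset_span (by simp)))
      obtain ⟨x, y, hxy⟩ := (mem_sc ι θ d hθ hrep hdk).mp h1
      have : ι d + ι 0 * θ = ι (π ^ (j + k) * x) + ι (π ^ j * y) * θ := by
        rw [← hxy, ← pow_two, hθ]; simp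
      obtain ⟨h2', -⟩ := coords_eq ι θ hind this
      have hdvd : π ^ (j + k) ∣ π ^ m * ud := by rw [← hd]; exact ⟨x, h2'⟩
      have : π ^ (j + k) ∣ π ^ m := (hud.dvd_mul_right).mp hdvd
      exact (pow_dvd_pow_iff hπ.ne_zero hπ.not_isUnit).mp this
  · rintro ⟨hjk, hjkm⟩
    rw [hrhs]
    rw [Ideal.span_singleton_mul_le_iff]
    intro z hz
    obtain ⟨x, y, rfl⟩ := (mem_I ι θ d hθ hrep hdk).mp hz
    have hcalc : θ * (ι (π ^ k * x) + ι y * θ)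
        = ι (π ^ (j + k) * (π ^ (m - (j + k)) * ud * y)) + ι (π ^ j * (π ^ (k - j) * x)) * θ := by
      have e := mulco' ι θ d hθ 0 1 (π ^ k * x) y
      simp only [map_zero, map_one, zero_add, one_mul, zero_mul, mul_zero, add_zero] at e
      have e1 : π ^ (j + k) * (π ^ (m - (j + k)) * ud * y) = d * y := by
        rw [← mul_assoc, ← mul_assoc, ← pow_add, show j + k + (m - (j+k)) = m by omega, hd]
      have e2 : π ^ j * (π ^ (k - j) * x) = π ^ k * x := by
        rw [← mul_assoc, ← pow_add, show j + (k - j) = k by omega]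
      rw [e, e1, e2]
    rw [hcalc]
    exact (mem_sc ι θ d hθ hrep hdk).mpr ⟨_, _, rfl⟩


lemma move1 {k : ℕ} {r c : R} (hc : r = π ^ k * c) :
    span ({ι (π ^ k), ι r + θ} : Set A) = span ({ι (π ^ k), θ} : Set A) := by
  apply le_antisymm <;> rw [span_le] <;> rintro z (rfl | h)
  · exact subset_span (by simp)
  · rw [show z = ι c * ι (π ^ k) + θ by rw [h, ← _root_.map_mul, mul_comm c, ← hc]]
    exact add_mem (Ideal.mul_mem_left _ _ (subset_span (by simp))) (subset_span (by simp))
  · exact subset_span (by simp)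
  · rw [show z = (ι r + θ) - ι c * ι (π ^ k) by
      rw [h, ← _root_.map_mul, mul_comm c, ← hc]; ring]
    exact sub_mem (subset_span (by simp)) (Ideal.mul_mem_left _ _ (subset_span (by simp)))

include hθ hud hd in
lemma move2 {k : ℕ} (hkm : k ≤ m) :
    span {θ} * span ({ι (π ^ k), θ} : Set A)
      = span {ι (π ^ k)} * span ({ι (π ^ (m - k)), θ} : Set A) := by
  obtain ⟨u, rfl⟩ := hud
  rw [span_singleton_mul_span_pair, span_singleton_mul_span_pair]
  apply le_antisymm <;> rw [span_le] <;> rintro z (rfl | rfl)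
  · exact subset_span (by simp [mul_comm])
  · have : θ * θ = ι ((u : R)) * (ι (π ^ k) * ι (π ^ (m - k))) := by
      rw [← _root_.map_mul, ← _root_.map_mul, ← pow_add,
        show k + (m - k) = m by omega, ← pow_two, hθ, hd, mul_comm]
    rw [this]
    exact Ideal.mul_mem_left _ _ (subset_span (by simp))
  · have : ι (π ^ k) * ι (π ^ (m - k)) = ι ((u⁻¹ : Rˣ) : R) * (θ * θ) := by
      rw [← pow_two, hθ, hd, ← _root_.map_mul, ← _root_.map_mul, ← pow_add,
        show k + (m - k) = m by omega]
      congr 1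
      rw [← mul_assoc, mul_comm ((u⁻¹ : Rˣ) : R), mul_assoc]
      simp
    rw [this]
    exact Ideal.mul_mem_left _ _ (subset_span (by simp))
  · exact subset_span (by simp [mul_comm])

include hθ in
lemma move3 {k n : ℕ} {r ε : R} (hε : IsUnit ε) (hn : r ^ 2 - d = π ^ n * ε)
    (hkn : k ≤ n) :
    span {ι r - θ} * span ({ι (π ^ k), ι r + θ} : Set A)
      = span {ι (π ^ k)} * span ({ι (π ^ (n - k)), ι (-r) + θ} : Set A) := by
  obtain ⟨u, rfl⟩ := hε
  rw [span_singleton_mul_span_pair, span_singleton_mul_span_pair]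
  have hpow : ι (π ^ k) * ι (π ^ (n - k)) = ι (π ^ n) := by
    rw [← _root_.map_mul, ← pow_add, show k + (n - k) = n by omega]
  have hL2 : (ι r - θ) * (ι r + θ) = ι ((u : R)) * (ι (π ^ k) * ι (π ^ (n - k))) := by
    rw [hpow, ← _root_.map_mul]
    have : (ι r - θ) * (ι r + θ) = ι (r ^ 2) - θ ^ 2 := by push_cast [map_pow]; ring
    rw [this, hθ, ← map_sub, hn]
    congr 1; ring
  apply le_antisymm <;> rw [span_le] <;> rintro z (rfl | rfl)
  · have : (ι r - θ) * ι (π ^ k) = -(ι (π ^ k) * (ι (-r) + θ)) := by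
      rw [map_neg]; ring
    rw [this]
    exact neg_mem (subset_span (by simp))
  · rw [hL2]
    exact Ideal.mul_mem_left _ _ (subset_span (by simp))
  · have : ι (π ^ k) * ι (π ^ (n - k)) = ι ((u⁻¹ : Rˣ) : R) * ((ι r - θ) * (ι r + θ)) := by
      rw [hL2, ← mul_assoc, ← _root_.map_mul, ← _root_.map_mul ι ((u⁻¹ : Rˣ) : R) ((u : Rˣ) : R),
        Units.inv_mul, map_one, one_mul]
    rw [this]
    exact Ideal.mul_mem_left _ _ (subset_span (by simp))
  · have : ι (π ^ k) * (ι (-r) + θ) = -((ι r - θ) * ι (π ^ k)) := by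
      rw [map_neg]; ring
    rw [this]
    exact neg_mem (subset_span (by simp))


include hπ in
lemma unit_add_pi_mul {u x : R} (hu : IsUnit u) : IsUnit (u + π * x) := by
  by_contra h
  have h1 : u + π * x ∈ nonunits R := h
  have h2 : -(π * x) ∈ nonunits R := by
    simp only [mem_nonunits_iff, IsUnit.neg_iff]
    intro hux
    exact hπ.not_isUnit (isUnit_of_mul_isUnit_left hux)
  have h3 : u + π * x + -(π * x) ∈ nonunits R := IsLocalRing.nonunits_add h1 h2
  simp only [add_neg_cancel_right, mem_nonunits_iff] at h3
  exact h3 hu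

include hπ h2 hθ in
lemma move4 (w c q : ℕ) {r₀ ε : R} (hr₀ : IsUnit r₀) (hε : IsUnit ε)
    (hn : (π ^ w * r₀) ^ 2 - d = π ^ (2 * (w + c + 1) + q) * ε) :
    span {ι (π ^ w * r₀ + π ^ (w + c + 1)) + θ} * span ({ι (π ^ w), θ} : Set A)
      = span {ι (π ^ w)} * span ({ι (π ^ (w + c + 1)), ι (π ^ w * r₀) + θ} : Set A) := by
  set k := w + c + 1 with hk
  set r : R := π ^ w * r₀ with hr
  set s : R := r + π ^ k with hs
  set s₀ : R := r₀ + π ^ (c + 1) with hs₀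
  set ν : R := 2 * r₀ + π ^ (c + 1) + π ^ (c + 1 + q) * ε with hν
  set μ : R := -(π ^ (c + 1 + q) * ε) - r₀ with hμdef
  set α : A := ι s + θ with hα
  have hνu : IsUnit ν := by
    have : ν = 2 * r₀ + π * (π ^ c + π ^ (c + q) * ε) := by
      rw [hν]; ring
    rw [this]
    exact unit_add_pi_mul hπ (h2.mul hr₀)
  have hsd : s ^ 2 - d = π ^ (2 * w + c + 1) * ν := by
    rw [hs, hr, hk, hν]
    linear_combination hn
  have hμ : d - s * r = π ^ (2 * w + c + 1) * μ := by
    rw [hs, hr, hk, hμdef]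
    linear_combination -hn
  obtain ⟨u, hu⟩ := hνu
  have huinv : ι ((u⁻¹ : Rˣ) : R) * ι ((u : Rˣ) : R) = 1 := by
    rw [← _root_.map_mul, Units.inv_mul, map_one]
  have hsdA : ι s * ι s - ι d = ι (π ^ (2 * w + c + 1)) * ι ν := by
    rw [← _root_.map_mul, ← _root_.map_mul, ← map_sub, ← pow_two, hsd]
  have hμA : ι d - ι s * ι r = ι (π ^ (2 * w + c + 1)) * ι μ := by
    rw [← _root_.map_mul, ← _root_.map_mul, ← map_sub, hμ]
  have hpw : ι (π ^ (2 * w + c + 1)) = ι (π ^ w) * ι (π ^ k) := by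
    rw [show 2 * w + c + 1 = w + k by omega, pow_add, _root_.map_mul]
  have hsA : ι s = ι (π ^ w) * ι s₀ := by
    rw [← _root_.map_mul]; congr 1; rw [hs, hs₀, hr, hk]; ring
  -- generator identities
  have g1 : α * ι (π ^ w) = ι (π ^ w) * ι (π ^ k) + ι (π ^ w) * (ι r + θ) := by
    rw [hα, hs, map_add]; ring
  have g2 : α * θ = ι s₀ * (ι (π ^ w) * (ι r + θ)) + ι μ * (ι (π ^ w) * ι (π ^ k)) := by
    rw [hα]
    calc (ι s + θ) * θ = ι s * θ + ι d := by rw [← hθ]; ring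
      _ = ι s * θ + (ι s * ι r + (ι d - ι s * ι r)) := by ring
      _ = ι s * θ + ι s * ι r + ι (π ^ (2 * w + c + 1)) * ι μ := by rw [hμA]; ring
      _ = _ := by rw [hsA, hpw]; ring
  have gR1 : ι (π ^ w) * ι (π ^ k) =
      ι ((u⁻¹ : Rˣ) : R) * (ι s₀ * (α * ι (π ^ w)) - α * θ) := by
    have key : ι s₀ * (α * ι (π ^ w)) - α * θ = ι s * ι s - ι d := by
      rw [hα, ← hθ, hsA]; ring
    rw [key, hsdA, hpw, ← hu]
    linear_combination (-(ι (π ^ w) * ι (π ^ k))) * huinv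
  rw [span_singleton_mul_span_pair, span_singleton_mul_span_pair]
  apply le_antisymm <;> rw [span_le] <;> rintro z (rfl | h)
  · rw [g1]; exact add_mem (subset_span (by simp)) (subset_span (by simp))
  · rw [h, g2]
    exact add_mem (Ideal.mul_mem_left _ _ (subset_span (by simp)))
      (Ideal.mul_mem_left _ _ (subset_span (by simp)))
  · rw [gR1]
    exact Ideal.mul_mem_left _ _ (sub_mem (Ideal.mul_mem_left _ _ (subset_span (by simp)))
      (subset_span (by simp)))
  · rw [h, show ι (π ^ w) * (ι r + θ) = α * ι (π ^ w) - ι (π ^ w) * ι (π ^ k) by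
      rw [g1]; ring]
    refine sub_mem (subset_span (by simp)) ?_
    rw [gR1]
    exact Ideal.mul_mem_left _ _ (sub_mem (Ideal.mul_mem_left _ _ (subset_span (by simp)))
      (subset_span (by simp)))


include hθ hrep hind hπ in
lemma normal_form (J : Ideal A) (hJ : J ≠ ⊥) :
    ∃ (g : R) (k : ℕ) (r : R), g ≠ 0 ∧ π ^ k ∣ r ^ 2 - d ∧
      J = span {ι g} * span ({ι (π ^ k), ι r + θ} : Set A) := by
  classical
  -- the ideal of θ-coordinates of J
  let Y : Ideal R :=
    { carrier := {s | ∃ x, ι x + ι s * θ ∈ J}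
      add_mem' := by
        rintro s t ⟨x, hx⟩ ⟨x', hx'⟩
        refine ⟨x + x', ?_⟩
        have := J.add_mem hx hx'
        convert this using 1
        simp only [map_add]; ring
      zero_mem' := ⟨0, by simpa using J.zero_mem⟩
      smul_mem' := by
        rintro c s ⟨x, hx⟩
        refine ⟨c * x, ?_⟩
        have h := J.mul_mem_left (ι c) hx
        convert h using 1
        simp only [smul_eq_mul, _root_.map_mul]; ring }
  have memY : ∀ s : R, s ∈ Y ↔ ∃ x, ι x + ι s * θ ∈ J := fun s => Iff.rfl
  -- Y is nonzero
  obtain ⟨z, hzJ, hz0⟩ := Submodule.exists_mem_ne_zero_of_ne_bot hJ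
  obtain ⟨zx, zy, hzxy⟩ := hrep z
  have hYne : Y ≠ ⊥ := by
    by_cases hy : zy = 0
    · have hzx : z = ι zx := by rw [hzxy, hy]; simp
      have hx0 : zx ≠ 0 := fun h => hz0 (by rw [hzx, h, map_zero])
      have : θ * z ∈ J := J.mul_mem_left θ hzJ
      have hmem : zx ∈ Y := ⟨0, by
        have e : ι 0 + ι zx * θ = θ * z := by rw [hzx]; simp [mul_comm]
        rw [e]; exact this⟩
      exact Submodule.ne_bot_iff _ |>.mpr ⟨zx, hmem, hx0⟩
    · have hmem : zy ∈ Y := ⟨zx, by rw [← hzxy]; exact hzJ⟩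
      exact Submodule.ne_bot_iff _ |>.mpr ⟨zy, hmem, hy⟩
  -- generator of Y
  obtain ⟨g, hgY⟩ : Submodule.IsPrincipal Y := IsPrincipalIdealRing.principal Y
  rw [Ideal.submodule_span_eq] at hgY
  have hgne : g ≠ 0 := by
    intro h; apply hYne; rw [hgY, h]; exact Ideal.span_singleton_eq_bot.mpr rfl
  have hgmem : g ∈ Y := by rw [hgY]; exact mem_span_singleton_self g
  obtain ⟨rg, hζJ⟩ := hgmem
  set ζ : A := ι rg + ι g * θ with hζ
  -- X = J ∩ R is nonzero
  set X : Ideal R := Ideal.comap ι J with hX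
  have hXne : X ≠ ⊥ := by
    have hzbar : z * (ι zx - ι zy * θ) = ι (zx ^ 2 - d * zy ^ 2) := by
      rw [hzxy]
      simp only [map_sub, _root_.map_mul, map_pow]
      linear_combination (- (ι zy * ι zy)) * hθ
    have hmem : zx ^ 2 - d * zy ^ 2 ∈ X := by
      rw [hX, Ideal.mem_comap, ← hzbar]; exact J.mul_mem_right _ hzJ
    have hne : zx ^ 2 - d * zy ^ 2 ≠ 0 := by
      intro h
      have h1 : z * (ι zx - ι zy * θ) = 0 := by rw [hzbar, h, map_zero]
      rcases mul_eq_zero.mp h1 with h2 | h2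
      · exact hz0 h2
      · have : ι zx + ι (-zy) * θ = 0 := by rw [map_neg]; linear_combination h2
        obtain ⟨e1, e2⟩ := hind _ _ this
        apply hz0; rw [hzxy, e1, neg_eq_zero.mp e2]; simp
    exact Submodule.ne_bot_iff _ |>.mpr ⟨_, hmem, hne⟩
  obtain ⟨x₀, hx₀X⟩ : Submodule.IsPrincipal X := IsPrincipalIdealRing.principal X
  rw [Ideal.submodule_span_eq] at hx₀X
  have hx₀ne : x₀ ≠ 0 := by
    intro h; apply hXne; rw [hx₀X, h]; exact Ideal.span_singleton_eq_bot.mpr rfl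
  have hx₀J : ι x₀ ∈ J := by
    have : x₀ ∈ X := by rw [hx₀X]; exact mem_span_singleton_self x₀
    rwa [hX, Ideal.mem_comap] at this
  -- decomposition of arbitrary elements of J
  have hdecomp : ∀ z' ∈ J, ∃ e cc : R, z' = ι e * ι x₀ + ι cc * ζ := by
    intro z' hz'
    obtain ⟨x, y, rfl⟩ := hrep z'
    have hyY : y ∈ Y := ⟨x, hz'⟩
    rw [hgY, mem_span_singleton] at hyY
    obtain ⟨cc, rfl⟩ := hyY
    have hsub : (ι x + ι (g * cc) * θ) - ι cc * ζ ∈ J :=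
      J.sub_mem hz' (J.mul_mem_left _ hζJ)
    have he : (ι x + ι (g * cc) * θ) - ι cc * ζ = ι (x - cc * rg) := by
      rw [hζ]; simp only [map_sub, _root_.map_mul]; ring
    rw [he] at hsub
    have : x - cc * rg ∈ X := by rw [hX, Ideal.mem_comap]; exact hsub
    rw [hx₀X, mem_span_singleton] at this
    obtain ⟨e, hee⟩ := this
    refine ⟨e, cc, ?_⟩
    have hιe := congrArg ι hee
    simp only [map_sub, _root_.map_mul] at hιe
    rw [hζ]
    simp only [_root_.map_mul]
    linear_combination hιe
  -- J as a span of two elements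
  have hJeq : J = span ({ι x₀, ζ} : Set A) := by
    apply le_antisymm
    · intro z' hz'
      obtain ⟨e, cc, rfl⟩ := hdecomp z' hz'
      exact add_mem (Ideal.mul_mem_left _ _ (subset_span (by simp)))
        (Ideal.mul_mem_left _ _ (subset_span (by simp)))
    · rw [span_le]
      rintro w (rfl | hw)
      · exact hx₀J
      · simp only [Set.mem_singleton_iff] at hw
        rw [hw]; exact hζJ
  -- θ * ζ ∈ J gives divisibility information
  have hθζ : θ * ζ = ι (d * g) + ι rg * θ := by
    rw [hζ]
    simp only [_root_.map_mul]
    linear_combination (ι g) * hθ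
  have hrgY : rg ∈ Y := ⟨d * g, by rw [← hθζ]; exact J.mul_mem_left θ hζJ⟩
  rw [hgY, mem_span_singleton] at hrgY
  obtain ⟨r₁, hr₁⟩ := hrgY
  -- x₀ is divisible by g
  have hx₀Y : x₀ ∈ Y := ⟨0, by
    have e : ι 0 + ι x₀ * θ = θ * ι x₀ := by simp [mul_comm]
    rw [e]; exact J.mul_mem_left θ hx₀J⟩
  rw [hgY, mem_span_singleton] at hx₀Y
  obtain ⟨h, hh⟩ := hx₀Y
  have hhne : h ≠ 0 := by rintro rfl; rw [mul_zero] at hh; exact hx₀ne hh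
  -- h divides r₁ ^ 2 - d
  have hdvd : h ∣ r₁ ^ 2 - d := by
    obtain ⟨e, cc, hec⟩ := hdecomp (θ * ζ) (J.mul_mem_left θ hζJ)
    have hco : ι (d * g) + ι rg * θ = ι (e * x₀ + cc * rg) + ι (cc * g) * θ := by
      rw [← hθζ, hec, hζ]; simp only [map_add, _root_.map_mul]; ring
    obtain ⟨h1, h2⟩ := coords_eq ι θ hind hco
    -- h2 : rg = cc * g, and rg = g * r₁, so cc = r₁
    have hcc : cc = r₁ := by
      apply mul_left_cancel₀ hgne
      rw [← hr₁, h2]; ring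
    subst hcc
    -- h1 : d * g = e * x₀ + cc * rg
    refine ⟨-e, ?_⟩
    apply mul_left_cancel₀ hgne
    rw [hh] at h1
    rw [hr₁] at h1
    linear_combination -h1
  obtain ⟨kk, uh, huh⟩ := IsDiscreteValuationRing.eq_unit_mul_pow_irreducible hhne hπ
  refine ⟨g, kk, r₁, hgne, ?_, ?_⟩
  · exact dvd_trans (Dvd.intro_left _ huh.symm) hdvd
  · rw [hJeq, span_singleton_mul_span_pair]
    have e2 : ι g * (ι r₁ + θ) = ζ := by
      rw [hζ, hr₁]; simp only [map_add, _root_.map_mul]; ring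
    rw [e2]
    -- span {ι x₀, ζ} = span {ι g * ι (π ^ kk), ζ}
    have e3 : ι x₀ = ι ((uh : Rˣ) : R) * (ι g * ι (π ^ kk)) := by
      rw [← _root_.map_mul, ← _root_.map_mul, hh, huh]; ring_nf
    have e4 : ι g * ι (π ^ kk) = ι ((uh⁻¹ : Rˣ) : R) * ι x₀ := by
      rw [← _root_.map_mul, ← _root_.map_mul, hh, huh]
      congr 1
      have huu : ((uh⁻¹ : Rˣ) : R) * ((uh : Rˣ) : R) = 1 := Units.inv_mul _
      linear_combination (-(g * π ^ kk)) * huu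
    apply le_antisymm <;> rw [span_le] <;> rintro w (rfl | hw)
    · rw [e3]
      exact Ideal.mul_mem_left _ _ (subset_span (by simp))
    · simp only [Set.mem_singleton_iff] at hw; rw [hw]
      exact subset_span (by simp)
    · rw [e4]
      exact Ideal.mul_mem_left _ _ (subset_span (by simp))
    · simp only [Set.mem_singleton_iff] at hw; rw [hw]
      exact subset_span (by simp)


include hind in
lemma lin_ne (r : R) : ι r + θ ≠ 0 := by
  intro h
  have : ι r + ι 1 * θ = 0 := by rw [map_one, one_mul]; exact h
  exact one_ne_zero (hind r 1 this).2

include hind in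
lemma lin_ne' (r : R) : ι r - θ ≠ 0 := by
  intro h
  have : ι r + ι (-1) * θ = 0 := by rw [map_neg, map_one]; linear_combination h
  exact one_ne_zero (neg_eq_zero.mp (hind r (-1) this).2)

include hind in
lemma iotane {x : R} (hx : x ≠ 0) : ι x ≠ 0 := by
  intro h
  exact hx (iota_inj ι θ hind (by rw [h, map_zero]))

include hind in
lemma Ine (j : ℕ) : span ({ι (π ^ j), θ} : Set A) ≠ ⊥ := by
  intro h
  have : θ ∈ (⊥ : Ideal A) := h ▸ subset_span (by simp)
  exact theta_ne ι θ hind (Submodule.mem_bot A |>.mp this)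

include hind in
lemma Nne (k : ℕ) (r : R) : span ({ι (π ^ k), ι r + θ} : Set A) ≠ ⊥ := by
  intro h
  have : ι r + θ ∈ (⊥ : Ideal A) := h ▸ subset_span (by simp)
  exact lin_ne ι θ hind r (Submodule.mem_bot A |>.mp this)

-- local abbreviation for the relation
variable (A) in
def Rell : {J : Ideal A // J ≠ ⊥} → {J : Ideal A // J ≠ ⊥} → Prop :=
  fun J₁ J₂ => ∃ α₁ α₂ : A, α₁ ≠ 0 ∧ α₂ ≠ 0 ∧ span {α₁} * J₁.1 = span {α₂} * J₂.1

include hπ hθ hrep hind hud hd in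
lemma Icase (k : ℕ) (hk : k ≤ m) :
    ∃ j : ℕ, j ≤ m / 2 ∧
      Quot.mk (Rell A) ⟨span ({ι (π ^ k), θ} : Set A), Ine ι θ hind k⟩
        = Quot.mk (Rell A) ⟨span ({ι (π ^ j), θ} : Set A), Ine ι θ hind j⟩ := by
  by_cases h : k ≤ m / 2
  · exact ⟨k, h, rfl⟩
  · refine ⟨m - k, by omega, Quot.sound ?_⟩
    exact ⟨θ, ι (π ^ k), theta_ne ι θ hind,
      iotane ι θ hind (pow_ne_zero _ hπ.ne_zero),
      move2 ι θ d hθ m ud hud hd hk⟩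

include hπ h2 hθ hrep hind hud hd in
lemma Mcase (w c q : ℕ) {r₀ ε : R} (hr₀ : IsUnit r₀) (hε : IsUnit ε)
    (hn : (π ^ w * r₀) ^ 2 - d = π ^ (2 * (w + c + 1) + q) * ε) :
    m / 2 = w ∧
      Quot.mk (Rell A) ⟨span ({ι (π ^ (w + c + 1)), ι (π ^ w * r₀) + θ} : Set A),
          Nne ι θ hind _ _⟩
        = Quot.mk (Rell A) ⟨span ({ι (π ^ w), θ} : Set A), Ine ι θ hind w⟩ := by
  have hm2w : m = 2 * w := by
    have hda : d = π ^ (2 * w) * (r₀ ^ 2 - π ^ (2 * c + q + 2) * ε) := by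
      rw [show 2 * (w + c + 1) + q = 2 * w + (2 * c + q + 2) by omega, pow_add] at hn
      linear_combination -hn
    have hν₂ : IsUnit (r₀ ^ 2 - π ^ (2 * c + q + 2) * ε) := by
      have e : r₀ ^ 2 - π ^ (2 * c + q + 2) * ε
          = r₀ ^ 2 + π * (-(π ^ (2 * c + q + 1) * ε)) := by ring
      rw [e]
      exact unit_add_pi_mul hπ (hr₀.pow 2)
    obtain ⟨u1, hu1⟩ := hud
    obtain ⟨u2, hu2⟩ := hν₂
    refine IsDiscreteValuationRing.unit_mul_pow_congr_pow hπ hπ u1 u2 m (2 * w) ?_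
    rw [hu1, hu2, mul_comm ud, mul_comm (r₀ ^ 2 - π ^ (2 * c + q + 2) * ε), ← hd, ← hda]
  constructor
  · omega
  · refine (Quot.sound ?_).symm
    exact ⟨ι (π ^ w * r₀ + π ^ (w + c + 1)) + θ, ι (π ^ w),
      lin_ne ι θ hind _, iotane ι θ hind (pow_ne_zero _ hπ.ne_zero),
      move4 hπ h2 ι θ d hθ w c q hr₀ hε hn⟩

include hπ h2 hθ hrep hind hud hd in
lemma NtoI (k : ℕ) (r : R) (hdvd : π ^ k ∣ r ^ 2 - d) :
    ∃ j : ℕ, j ≤ m / 2 ∧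
      Quot.mk (Rell A) ⟨span ({ι (π ^ k), ι r + θ} : Set A), Nne ι θ hind k r⟩
        = Quot.mk (Rell A) ⟨span ({ι (π ^ j), θ} : Set A), Ine ι θ hind j⟩ := by
  -- r^2 - d ≠ 0
  have hrd : r ^ 2 - d ≠ 0 := by
    intro h0
    have hfac : (ι r + θ) * (ι r - θ) = ι (r ^ 2 - d) := by
      simp only [map_sub, map_pow]
      linear_combination -hθ
    rw [h0, map_zero] at hfac
    rcases mul_eq_zero.mp hfac with h | h
    · exact lin_ne ι θ hind r h
    · exact lin_ne' ι θ hind r h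
  obtain ⟨n, εu, hnεu⟩ := IsDiscreteValuationRing.eq_unit_mul_pow_irreducible hrd hπ
  set ε : R := (εu : R) with hεdef
  have hn : r ^ 2 - d = π ^ n * ε := by rw [hnεu]; ring
  have hkn : k ≤ n := by
    have h1 : π ^ k ∣ π ^ n * ε := hn ▸ hdvd
    have h2' : π ^ k ∣ π ^ n := (εu.isUnit.dvd_mul_right).mp h1
    exact (pow_dvd_pow_iff hπ.ne_zero hπ.not_isUnit).mp h2'
  -- a helper for the "π^k ∣ r" case
  have easy : ∀ (k' : ℕ) (r' : R), π ^ k' ∣ r' → π ^ k' ∣ r' ^ 2 - d →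
      ∃ j : ℕ, j ≤ m / 2 ∧
        Quot.mk (Rell A) ⟨span ({ι (π ^ k'), ι r' + θ} : Set A), Nne ι θ hind k' r'⟩
          = Quot.mk (Rell A) ⟨span ({ι (π ^ j), θ} : Set A), Ine ι θ hind j⟩ := by
    intro k' r' hr' hdvd'
    obtain ⟨cc, hcc⟩ := hr'
    have hNI : span ({ι (π ^ k'), ι r' + θ} : Set A) = span ({ι (π ^ k'), θ} : Set A) :=
      move1 ι θ hcc
    have hkm : k' ≤ m := by
      have hd1 : π ^ k' ∣ d := by
        have : π ^ k' ∣ r' ^ 2 := by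
          rw [pow_two, hcc]; exact Dvd.dvd.mul_right (dvd_mul_right _ _) _
        have := dvd_sub this hdvd'
        simpa using this
      rw [hd] at hd1
      have := (hud.dvd_mul_right).mp hd1
      exact (pow_dvd_pow_iff hπ.ne_zero hπ.not_isUnit).mp this
    obtain ⟨j, hj, hQ⟩ := Icase hπ ι θ d hθ hrep hind m ud hud hd k' hkm
    refine ⟨j, hj, ?_⟩
    have hsub : (⟨span ({ι (π ^ k'), ι r' + θ} : Set A), Nne ι θ hind k' r'⟩ :
        {J : Ideal A // J ≠ ⊥}) = ⟨span ({ι (π ^ k'), θ} : Set A), Ine ι θ hind k'⟩ :=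
      Subtype.ext hNI
    rw [hsub]
    exact hQ
  by_cases hr : π ^ k ∣ r
  · exact easy k r hr hdvd
  · have hrne : r ≠ 0 := fun h => hr (h ▸ dvd_zero _)
    obtain ⟨w, r₀u, hwme⟩ := IsDiscreteValuationRing.eq_unit_mul_pow_irreducible hrne hπ
    have hrw : r = π ^ w * (r₀u : R) := by rw [hwme]; ring
    have hwk : w < k := by
      by_contra hge
      push_neg at hge
      exact hr (hrw ▸ Dvd.dvd.mul_right (pow_dvd_pow π hge) _)
    by_cases h2k : 2 * k ≤ n
    · -- direct move4
      obtain ⟨c, hc⟩ : ∃ c, k = w + c + 1 := ⟨k - w - 1, by omega⟩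
      obtain ⟨q, hq⟩ : ∃ q, n = 2 * (w + c + 1) + q := ⟨n - 2 * k, by omega⟩
      have hn' : (π ^ w * (r₀u : R)) ^ 2 - d = π ^ (2 * (w + c + 1) + q) * ε := by
        rw [← hrw, ← hq]; exact hn
      obtain ⟨hm2, hQ⟩ := Mcase hπ h2 ι θ d hθ hrep hind m ud hud hd w c q
        r₀u.isUnit εu.isUnit hn'
      refine ⟨w, by omega, ?_⟩
      have hsub : (⟨span ({ι (π ^ k), ι r + θ} : Set A), Nne ι θ hind k r⟩ :
          {J : Ideal A // J ≠ ⊥})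
          = ⟨span ({ι (π ^ (w + c + 1)), ι (π ^ w * (r₀u : R)) + θ} : Set A),
              Nne ι θ hind _ _⟩ := by
        apply Subtype.ext
        rw [← hc, ← hrw]
      rw [hsub]
      exact hQ
    · -- conjugate move first
      have step1 : Quot.mk (Rell A) ⟨span ({ι (π ^ k), ι r + θ} : Set A), Nne ι θ hind k r⟩
          = Quot.mk (Rell A) ⟨span ({ι (π ^ (n - k)), ι (-r) + θ} : Set A),
              Nne ι θ hind (n - k) (-r)⟩ :=
        Quot.sound ⟨ι r - θ, ι (π ^ k), lin_ne' ι θ hind r,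
          iotane ι θ hind (pow_ne_zero _ hπ.ne_zero),
          move3 ι θ d hθ εu.isUnit hn hkn⟩
      have hdvd2 : π ^ (n - k) ∣ (-r) ^ 2 - d := by
        have : (-r) ^ 2 - d = π ^ n * ε := by rw [neg_pow]; simpa using hn
        rw [this]
        exact Dvd.dvd.mul_right (pow_dvd_pow π (by omega)) _
      by_cases hr2 : π ^ (n - k) ∣ -r
      · obtain ⟨j, hj, hQ⟩ := easy (n - k) (-r) hr2 hdvd2
        exact ⟨j, hj, step1.trans hQ⟩
      · have hwk2 : w < n - k := by
          by_contra hge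
          push_neg at hge
          refine hr2 ?_
          rw [hrw]
          exact Dvd.dvd.mul_right (pow_dvd_pow π hge) _ |>.neg_right
        obtain ⟨c, hc⟩ : ∃ c, n - k = w + c + 1 := ⟨n - k - w - 1, by omega⟩
        obtain ⟨q, hq⟩ : ∃ q, n = 2 * (w + c + 1) + q := ⟨n - 2 * (n - k), by omega⟩
        have hn'' : (π ^ w * (-(r₀u : R))) ^ 2 - d = π ^ (2 * (w + c + 1) + q) * ε := by
          rw [← hq]
          have : (π ^ w * (-(r₀u : R))) ^ 2 = r ^ 2 := by rw [hrw]; ring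
          rw [this]; exact hn
        obtain ⟨hm2, hQ⟩ := Mcase hπ h2 ι θ d hθ hrep hind m ud hud hd w c q
          r₀u.isUnit.neg εu.isUnit hn''
        refine ⟨w, by omega, ?_⟩
        have hsub : (⟨span ({ι (π ^ (n - k)), ι (-r) + θ} : Set A),
            Nne ι θ hind (n - k) (-r)⟩ : {J : Ideal A // J ≠ ⊥})
            = ⟨span ({ι (π ^ (w + c + 1)), ι (π ^ w * (-(r₀u : R))) + θ} : Set A),
                Nne ι θ hind _ _⟩ := by
          apply Subtype.ext
          rw [← hc, hrw]
          ring_nf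
        rw [step1, hsub]
        exact hQ

include hπ h2 hθ hrep hind hud hd in
lemma classify (J : Ideal A) (hJ : J ≠ ⊥) :
    ∃ j : ℕ, j ≤ m / 2 ∧
      Quot.mk (Rell A) ⟨J, hJ⟩
        = Quot.mk (Rell A) ⟨span ({ι (π ^ j), θ} : Set A), Ine ι θ hind j⟩ := by
  obtain ⟨g, k, r, hg, hdvd, hJeq⟩ := normal_form hπ ι θ d hθ hrep hind J hJ
  have step0 : Quot.mk (Rell A) ⟨J, hJ⟩
      = Quot.mk (Rell A) ⟨span ({ι (π ^ k), ι r + θ} : Set A), Nne ι θ hind k r⟩ :=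
    Quot.sound ⟨1, ι g, one_ne_zero, iotane ι θ hind hg, by
      rw [Ideal.span_singleton_one, Ideal.top_mul]; exact hJeq⟩
  obtain ⟨j, hj, hQ⟩ := NtoI hπ h2 ι θ d hθ hrep hind m ud hud hd k r hdvd
  exact ⟨j, hj, step0.trans hQ⟩

lemma Q_resp (j : ℕ) : ∀ J₁ J₂ : {J : Ideal A // J ≠ ⊥}, Rell A J₁ J₂ →
    (span {θ} * J₁.1 ≤ span {ι (π ^ j)} * J₁.1)
      = (span {θ} * J₂.1 ≤ span {ι (π ^ j)} * J₂.1) := by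
  have aux : ∀ (I I' : Ideal A) (β γ : A), β ≠ 0 → γ ≠ 0 →
      span {β} * I = span {γ} * I' →
      (span {θ} * I ≤ span {ι (π ^ j)} * I) →
      (span {θ} * I' ≤ span {ι (π ^ j)} * I') := by
    intro I I' β γ hβ hγ heq h
    apply (span_cancel hγ).mp
    calc span {γ} * (span {θ} * I')
        = span {θ} * (span {γ} * I') := by ring
      _ = span {θ} * (span {β} * I) := by rw [← heq]
      _ = span {β} * (span {θ} * I) := by ring
      _ ≤ span {β} * (span {ι (π ^ j)} * I) := Ideal.mul_mono_right h
      _ = span {ι (π ^ j)} * (span {β} * I) := by ring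
      _ = span {ι (π ^ j)} * (span {γ} * I') := by rw [heq]
      _ = span {γ} * (span {ι (π ^ j)} * I') := by ring
  rintro J₁ J₂ ⟨α₁, α₂, h1, h2', heq⟩
  apply propext
  constructor
  · exact aux _ _ _ _ h1 h2' heq
  · exact aux _ _ _ _ h2' h1 heq.symm

include hπ h2 hθ hrep hind hud hd in
theorem abstract_main :
    Nat.card (Quot (fun (J₁ J₂ : {J : Ideal A // J ≠ ⊥}) =>
      ∃ α₁ α₂ : A, α₁ ≠ 0 ∧ α₂ ≠ 0 ∧ span {α₁} * J₁.1 = span {α₂} * J₂.1))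
      = m / 2 + 1 := by
  have hrelEq : (fun (J₁ J₂ : {J : Ideal A // J ≠ ⊥}) =>
      ∃ α₁ α₂ : A, α₁ ≠ 0 ∧ α₂ ≠ 0 ∧ span {α₁} * J₁.1 = span {α₂} * J₂.1) = Rell A := rfl
  rw [hrelEq]
  set F : Fin (m / 2 + 1) → Quot (Rell A) := fun j =>
    Quot.mk _ ⟨span ({ι (π ^ (j : ℕ)), θ} : Set A), Ine ι θ hind (j : ℕ)⟩ with hF
  have hsurj : Function.Surjective F := by
    intro q
    induction q using Quot.ind with
    | _ Jp =>
      obtain ⟨J, hJ⟩ := Jp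
      obtain ⟨j, hj, hQ⟩ := classify hπ h2 ι θ d hθ hrep hind m ud hud hd J hJ
      refine ⟨⟨j, by omega⟩, ?_⟩
      rw [hF]
      exact hQ.symm
  have hkey : ∀ j₁ j₂ : Fin (m / 2 + 1), F j₁ = F j₂ → (j₁ : ℕ) ≤ (j₂ : ℕ) := by
    intro j₁ j₂ hFe
    have hlift := congrArg (Quot.lift (fun Jp : {J : Ideal A // J ≠ ⊥} =>
      (span {θ} * Jp.1 ≤ span {ι (π ^ (j₁ : ℕ))} * Jp.1)) (Q_resp ι θ (j₁ : ℕ))) hFe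
    have hj₁m : (j₁ : ℕ) ≤ m := by
      have := j₁.isLt; omega
    have hj₂m : (j₂ : ℕ) ≤ m := by
      have := j₂.isLt; omega
    have hQ1 : span {θ} * span ({ι (π ^ (j₁ : ℕ)), θ} : Set A)
        ≤ span {ι (π ^ (j₁ : ℕ))} * span ({ι (π ^ (j₁ : ℕ)), θ} : Set A) := by
      refine (Q_iff hπ ι θ d hθ hrep hind m ud hud hd (j₁ : ℕ) (j₁ : ℕ) hj₁m).mpr ?_
      have := j₁.isLt
      omega
    have hlift2 : (span {θ} * span ({ι (π ^ (j₁ : ℕ)), θ} : Set A)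
        ≤ span {ι (π ^ (j₁ : ℕ))} * span ({ι (π ^ (j₁ : ℕ)), θ} : Set A))
        = (span {θ} * span ({ι (π ^ (j₂ : ℕ)), θ} : Set A)
        ≤ span {ι (π ^ (j₁ : ℕ))} * span ({ι (π ^ (j₂ : ℕ)), θ} : Set A)) := hlift
    have hQ2 : span {θ} * span ({ι (π ^ (j₂ : ℕ)), θ} : Set A)
        ≤ span {ι (π ^ (j₁ : ℕ))} * span ({ι (π ^ (j₂ : ℕ)), θ} : Set A) := hlift2 ▸ hQ1
    exact ((Q_iff hπ ι θ d hθ hrep hind m ud hud hd (j₁ : ℕ) (j₂ : ℕ) hj₂m).mp hQ2).1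
  have hinj : Function.Injective F := by
    intro j₁ j₂ hFe
    have h12 := hkey j₁ j₂ hFe
    have h21 := hkey j₂ j₁ hFe.symm
    exact Fin.ext (by omega)
  have hcard := Nat.card_eq_of_bijective F ⟨hinj, hsurj⟩
  rw [← hcard, Nat.card_eq_fintype_card, Fintype.card_fin]

end Abstract

/-- Let `R` be a DVR (with uniformizer `π`) in which `2` is a unit,
`f(x) = x² − ax − b ∈ R[x]` monic irreducible over the fraction field `K`, and `θ` the
class of `x` in `R[θ] := R[x]/(f)`. If `v(a²/4 + b) = m` (i.e. `a²/4 + b` is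
associated to `π^m`), then the set of equivalence classes of nonzero ideals of `R[θ]`
is finite of cardinality `⌊m/2⌋ + 1`. -/
theorem class_number_two_unit
    (R : Type*) [CommRing R] [IsDomain R] [IsDiscreteValuationRing R]
    (K : Type*) [Field K] [Algebra R K] [IsFractionRing R K]
    (π : R) (hπ : Irreducible π) (h2 : IsUnit (2 : R))
    (a b : R) (f : R[X]) (hf : f = X ^ 2 - C a * X - C b)
    (hirr : Irreducible (f.map (algebraMap R K)))
    (m : ℕ) (hm : Associated (π ^ m) (Ring.inverse 4 * a ^ 2 + b)) :
    Nat.card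
      (Quot (fun (J₁ J₂ : {J : Ideal (R[X] ⧸ Ideal.span {f}) // J ≠ ⊥}) =>
        ∃ α₁ α₂ : R[X] ⧸ Ideal.span {f}, α₁ ≠ 0 ∧ α₂ ≠ 0 ∧
          Ideal.span {α₁} * J₁.1 = Ideal.span {α₂} * J₂.1)) = m / 2 + 1 := by
  have hmonic : f.Monic := by
    have e : f = X ^ (1 + 1) - (C a * X + C b) := by rw [hf]; ring
    rw [e]
    exact monic_X_pow_sub (degree_linear_le.trans_lt (by norm_num))
  have hfne : f ≠ 0 := hmonic.ne_zero
  have hndf : f.natDegree = 2 := by rw [hf]; compute_degree!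
  have hdegf : f.degree = 2 := by rw [hf]; compute_degree!
  have hfirr : Irreducible f :=
    Polynomial.Monic.irreducible_of_irreducible_map (algebraMap R K) f hmonic hirr
  have hfprime : Prime f := UniqueFactorizationMonoid.irreducible_iff_prime.mp hfirr
  haveI hdom : IsDomain (R[X] ⧸ Ideal.span {f}) :=
    Ideal.Quotient.isDomain_iff_prime _ |>.mpr
      ((Ideal.span_singleton_prime hfne).mpr hfprime)
  set A := R[X] ⧸ Ideal.span {f} with hA
  let mkq : R[X] →+* A := Ideal.Quotient.mk (Ideal.span {f})
  let ι : R →+* A := mkq.comp Polynomial.C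
  set c : R := Ring.inverse (2 : R) * a with hc
  set d : R := Ring.inverse (4 : R) * a ^ 2 + b with hd
  let θ : A := mkq (X - C c)
  have h4 : IsUnit (4 : R) := by
    have h := h2.mul h2
    rwa [show (2 : R) * 2 = 4 by norm_num] at h
  have h2c : (2 : R) * c = a := by
    rw [hc, ← mul_assoc, Ring.mul_inverse_cancel _ h2, one_mul]
  have hinv24 : Ring.inverse (2 : R) * Ring.inverse 2 = Ring.inverse (4 : R) := by
    have h1 : (Ring.inverse (2 : R) * Ring.inverse 2) * 4 = 1 := by
      rw [show (4 : R) = 2 * 2 by norm_num]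
      calc Ring.inverse (2 : R) * Ring.inverse 2 * (2 * 2)
          = (Ring.inverse (2 : R) * 2) * (Ring.inverse (2 : R) * 2) := by ring
        _ = 1 := by rw [Ring.inverse_mul_cancel _ h2, one_mul]
    have h1' : Ring.inverse (4 : R) * 4 = 1 := Ring.inverse_mul_cancel _ h4
    exact mul_right_cancel₀ h4.ne_zero (h1.trans h1'.symm)
  have hcd : c ^ 2 - d = -b := by
    rw [hc, hd, ← hinv24]
    ring
  have hfactor : f = (X - C c) ^ 2 - C d := by
    have hb : b = d - c ^ 2 := by linear_combination hcd
    rw [hf, show C a = C (2 * c) by rw [h2c], hb]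
    simp only [C_sub, C_mul, C_pow, map_ofNat]
    ring
  have hf0 : mkq f = 0 := Ideal.Quotient.eq_zero_iff_mem.mpr (Ideal.subset_span rfl)
  have hθeq : θ ^ 2 = ι d := by
    have h1 : θ ^ 2 - ι d = mkq ((X - C c) ^ 2 - C d) := by
      simp only [θ, ι, RingHom.comp_apply, map_sub, map_pow]
    rw [← hfactor, hf0] at h1
    exact sub_eq_zero.mp h1
  have hrep : ∀ z : A, ∃ x y : R, z = ι x + ι y * θ := by
    intro z
    obtain ⟨p, rfl⟩ := Ideal.Quotient.mk_surjective z
    have hq1 : f ≠ 1 := fun h => by rw [h] at hndf; simp at hndf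
    have hdlt : (p %ₘ f).natDegree < 2 := hndf ▸ natDegree_modByMonic_lt p hmonic hq1
    have hqe : p %ₘ f = C ((p %ₘ f).coeff 1) * X + C ((p %ₘ f).coeff 0) :=
      eq_X_add_C_of_natDegree_le_one (by omega)
    have hmk : mkq p = mkq (p %ₘ f) := by
      rw [modByMonic_eq_sub_mul_div p f, map_sub, _root_.map_mul, hf0, zero_mul,
        sub_zero]
    obtain ⟨q1, q0, hqe2⟩ : ∃ q1 q0 : R, p %ₘ f = C q1 * X + C q0 := ⟨_, _, hqe⟩
    refine ⟨q0 + q1 * c, q1, ?_⟩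
    have hz : (Ideal.Quotient.mk (Ideal.span {f})) p = mkq p := rfl
    have e : C q1 * X + C q0 = C (q0 + q1 * c) + C q1 * (X - C c) := by
      simp only [C_add, C_mul]; ring
    rw [hz, hmk, hqe2, e, map_add, _root_.map_mul]
    rfl
  have hind : ∀ x y : R, ι x + ι y * θ = 0 → x = 0 ∧ y = 0 := by
    intro x y h
    have hpoly : mkq (C x + C y * (X - C c)) = 0 := by
      rw [map_add, _root_.map_mul]
      exact h
    have hmem : C x + C y * (X - C c) ∈ Ideal.span {f} :=
      Ideal.Quotient.eq_zero_iff_mem.mp hpoly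
    rw [Ideal.mem_span_singleton] at hmem
    by_cases hp : C x + C y * (X - C c) = 0
    · have e : C (x - y * c) + C y * X = 0 := by
        rw [← hp]; simp only [C_sub, C_mul]; ring
      have hco1 := congrArg (fun t => Polynomial.coeff t 1) e
      have hco0 := congrArg (fun t => Polynomial.coeff t 0) e
      simp only [coeff_add, coeff_C, coeff_C_mul, coeff_X_one, coeff_zero, mul_one,
        if_neg (one_ne_zero), zero_add, coeff_X_zero, mul_zero, add_zero, if_pos rfl] at hco1 hco0
      refine ⟨?_, hco1⟩
      have : x - y * c = 0 := hco0
      rw [hco1] at this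
      simpa using this
    · exfalso
      have hdle : (C x + C y * (X - C c)).degree ≤ 1 := by
        have e : C x + C y * (X - C c) = C y * X + C (x - y * c) := by
          simp only [C_sub, C_mul]; ring
        rw [e]; exact degree_linear_le
      have hled := Polynomial.degree_le_of_dvd hmem hp
      rw [hdegf] at hled
      have h21 := hled.trans hdle
      norm_num at h21
  obtain ⟨u, hu⟩ := hm
  exact abstract_main hπ h2 ι θ d hθeq hrep hind m (u : R) u.isUnit hu.symm
end

section
/- Let R be a discrete valuation ring with uniformizer π and valuation v, with v(2) = e > 0, and let f(x) = x² − ax − b ∈ R[x] be monic irreducible over the fraction field K with v(a) ≥ e. Write Δ := a²/4 + b ∈ R and let θ be the class of x in R[θ] := R[x]/(f). If v(Δ) is odd, then every nonzero ideal of R[θ] is equivalent to exactly one of the ideals Rπᵏ + R(θ − a/2) with 0 ≤ k ≤ ⌊½v(Δ)⌋; in particular the set of equivalence classes of nonzero ideals of R[θ] has cardinality ⌊½v(Δ)⌋ + 1. -/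
open Polynomial
set_option linter.unusedSectionVars false
set_option maxHeartbeats 1000000

section Generic
variable {S : Type*} [CommRing S] [IsDomain S]

/-- the equivalence relation on ideals -/
def IRel (J₁ J₂ : Ideal S) : Prop :=
  ∃ α₁ α₂ : S, α₁ ≠ 0 ∧ α₂ ≠ 0 ∧ Ideal.span {α₁} * J₁ = Ideal.span {α₂} * J₂

theorem IRel.refl (J : Ideal S) : IRel J J := ⟨1, 1, one_ne_zero, one_ne_zero, rfl⟩

theorem IRel.symm {J₁ J₂ : Ideal S} (h : IRel J₁ J₂) : IRel J₂ J₁ := by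
  obtain ⟨α₁, α₂, h1, h2, h⟩ := h; exact ⟨α₂, α₁, h2, h1, h.symm⟩

theorem IRel.trans {J₁ J₂ J₃ : Ideal S} (h : IRel J₁ J₂) (h' : IRel J₂ J₃) : IRel J₁ J₃ := by
  obtain ⟨α₁, α₂, h1, h2, h⟩ := h
  obtain ⟨β₁, β₂, g1, g2, g⟩ := h'
  refine ⟨α₁ * β₁, α₂ * β₂, mul_ne_zero h1 g1, mul_ne_zero h2 g2, ?_⟩
  rw [← Ideal.span_singleton_mul_span_singleton, ← Ideal.span_singleton_mul_span_singleton]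
  calc Ideal.span {α₁} * Ideal.span {β₁} * J₁
      = Ideal.span {β₁} * (Ideal.span {α₁} * J₁) := by ring
    _ = Ideal.span {β₁} * (Ideal.span {α₂} * J₂) := by rw [h]
    _ = Ideal.span {α₂} * (Ideal.span {β₁} * J₂) := by ring
    _ = Ideal.span {α₂} * (Ideal.span {β₂} * J₃) := by rw [g]
    _ = Ideal.span {α₂} * Ideal.span {β₂} * J₃ := by ring

theorem span_singleton_mul_span_pair_s16 (x y z : S) :
    Ideal.span {x} * Ideal.span {y, z} = Ideal.span {x * y, x * z} := by
  rw [Ideal.span_insert, Ideal.mul_sup, Ideal.span_singleton_mul_span_singleton,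
    Ideal.span_singleton_mul_span_singleton, Ideal.span_insert]

theorem span_cancel_s16 {x : S} (hx : x ≠ 0) {A B : Ideal S}
    (h : Ideal.span {x} * A = Ideal.span {x} * B) : A = B := by
  ext z
  constructor <;> intro hz
  · have : x * z ∈ Ideal.span {x} * B := by
      rw [← h]; exact Ideal.mul_mem_mul (Ideal.mem_span_singleton_self x) hz
    obtain ⟨w, hw, hxw⟩ := Ideal.mem_span_singleton_mul.mp this
    exact mul_left_cancel₀ hx hxw ▸ hw
  · have : x * z ∈ Ideal.span {x} * A := by
      rw [h]; exact Ideal.mul_mem_mul (Ideal.mem_span_singleton_self x) hz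
    obtain ⟨w, hw, hxw⟩ := Ideal.mem_span_singleton_mul.mp this
    exact mul_left_cancel₀ hx hxw ▸ hw
end Generic

section Setup
variable {R : Type*} [CommRing R] [IsDomain R]
variable {a b : R} {f : R[X]}

theorem fmonic (hf : f = X ^ 2 - C a * X - C b) : f.Monic := by
  have h : f = X ^ 2 - (C a * X + C b) := by rw [hf]; ring
  rw [h]
  apply monic_X_pow_sub
  calc (C a * X + C b).degree ≤ max (C a * X).degree (C b).degree := degree_add_le _ _
    _ ≤ max 1 0 := max_le_max (degree_C_mul_X_le a) degree_C_le
    _ < 2 := by decide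

theorem fdeg (hf : f = X ^ 2 - C a * X - C b) : f.degree = 2 := by
  have h : f = X ^ 2 - (C a * X + C b) := by rw [hf]; ring
  have hlt : (C a * X + C b).degree < (X ^ 2 : R[X]).degree := by
    rw [degree_X_pow]
    calc (C a * X + C b).degree ≤ max (C a * X).degree (C b).degree := degree_add_le _ _
      _ ≤ max 1 0 := max_le_max (degree_C_mul_X_le a) degree_C_le
      _ < 2 := by decide
  rw [h, degree_sub_eq_left_of_degree_lt hlt, degree_X_pow]
  rfl

theorem fne (hf : f = X ^ 2 - C a * X - C b) : f ≠ 0 := by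
  intro h0
  have := fdeg hf
  rw [h0, degree_zero] at this
  exact absurd this (by decide)

theorem rep_ex (hf : f = X ^ 2 - C a * X - C b) (z : R[X] ⧸ Ideal.span {f}) :
    ∃ c d : R, z = algebraMap R (R[X] ⧸ Ideal.span {f}) c +
      algebraMap R (R[X] ⧸ Ideal.span {f}) d * Ideal.Quotient.mk (Ideal.span {f}) X := by
  obtain ⟨p, rfl⟩ := Ideal.Quotient.mk_surjective z
  set q := p %ₘ f with hq
  have hmkeq : Ideal.Quotient.mk (Ideal.span {f}) p = Ideal.Quotient.mk (Ideal.span {f}) q := by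
    rw [Ideal.Quotient.mk_eq_mk_iff_sub_mem, Ideal.mem_span_singleton]
    rw [hq, modByMonic_eq_sub_mul_div p f]
    exact ⟨p /ₘ f, by ring⟩
  have hdeg : q.degree ≤ 1 := by
    have := degree_modByMonic_lt p (fmonic hf)
    rw [fdeg hf] at this
    exact Order.lt_succ_iff.mp this
  have hrep := eq_X_add_C_of_degree_le_one hdeg
  refine ⟨q.coeff 0, q.coeff 1, ?_⟩
  rw [hmkeq]
  conv_lhs => rw [hrep]
  rw [map_add, map_mul, add_comm]
  rfl

theorem rep_unique (hf : f = X ^ 2 - C a * X - C b) {c d : R}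
    (h : algebraMap R (R[X] ⧸ Ideal.span {f}) c +
      algebraMap R (R[X] ⧸ Ideal.span {f}) d * Ideal.Quotient.mk (Ideal.span {f}) X = 0) :
    c = 0 ∧ d = 0 := by
  have h' : Ideal.Quotient.mk (Ideal.span {f}) (C c + C d * X) = 0 := by
    rw [map_add, map_mul]; exact h
  rw [Ideal.Quotient.eq_zero_iff_mem, Ideal.mem_span_singleton] at h'
  have hg : C c + C d * X = 0 := by
    by_contra hne
    have := degree_le_of_dvd h' hne
    rw [fdeg hf] at this
    have hle : (C c + C d * X).degree ≤ 1 :=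
      le_trans (degree_add_le _ _) (max_le (degree_C_le.trans (by decide)) (degree_C_mul_X_le d))
    exact absurd (le_trans this hle) (by decide)
  constructor
  · have := congrArg (fun p => Polynomial.coeff p 0) hg
    simpa using this
  · have := congrArg (fun p => Polynomial.coeff p 1) hg
    simpa using this

theorem alg_inj (hf : f = X ^ 2 - C a * X - C b) {c : R}
    (h : algebraMap R (R[X] ⧸ Ideal.span {f}) c = 0) : c = 0 :=
  (rep_unique hf (by rw [map_zero, zero_mul, add_zero]; exact h)).1

theorem theta_sq (hf : f = X ^ 2 - C a * X - C b) :
    Ideal.Quotient.mk (Ideal.span {f}) X * Ideal.Quotient.mk (Ideal.span {f}) X =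
      algebraMap R (R[X] ⧸ Ideal.span {f}) a * Ideal.Quotient.mk (Ideal.span {f}) X +
      algebraMap R (R[X] ⧸ Ideal.span {f}) b := by
  have h0 : Ideal.Quotient.mk (Ideal.span {f}) f = 0 :=
    Ideal.Quotient.eq_zero_iff_mem.mpr (Ideal.subset_span rfl)
  have h0' : Ideal.Quotient.mk (Ideal.span {f}) (X ^ 2 - C a * X - C b) = 0 := by
    rw [← hf]; exact h0
  have : Ideal.Quotient.mk (Ideal.span {f}) (X ^ 2) -
      Ideal.Quotient.mk (Ideal.span {f}) (C a * X) - Ideal.Quotient.mk (Ideal.span {f}) (C b)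
      = 0 := by rw [← map_sub, ← map_sub]; exact h0' 
  have h2 : Ideal.Quotient.mk (Ideal.span {f}) (X ^ 2) =
      Ideal.Quotient.mk (Ideal.span {f}) X * Ideal.Quotient.mk (Ideal.span {f}) X := by
    rw [← map_mul, ← sq]
  rw [h2, map_mul] at this
  have h3 : Ideal.Quotient.mk (Ideal.span {f}) (C a) =
      algebraMap R (R[X] ⧸ Ideal.span {f}) a := rfl
  have h4 : Ideal.Quotient.mk (Ideal.span {f}) (C b) =
      algebraMap R (R[X] ⧸ Ideal.span {f}) b := rfl
  rw [h3, h4] at this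
  linear_combination this

theorem quot_domain {K : Type*} [Field K] [Algebra R K] [IsDiscreteValuationRing R]
    (hf : f = X ^ 2 - C a * X - C b)
    (hirr : Irreducible (f.map (algebraMap R K))) : IsDomain (R[X] ⧸ Ideal.span {f}) := by
  have hfirr : Irreducible f :=
    (fmonic hf).irreducible_of_irreducible_map (algebraMap R K) f hirr
  have hprime : Prime f := UniqueFactorizationMonoid.irreducible_iff_prime.mp hfirr
  have : (Ideal.span {f}).IsPrime := (Ideal.span_singleton_prime (fne hf)).mpr hprime
  exact (Ideal.Quotient.isDomain_iff_prime _).mpr this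

end Setup

namespace St16
variable {R : Type*} [CommRing R] [IsDomain R] [IsDiscreteValuationRing R]

theorem unit_sub {π : R} (hπ : Irreducible π) {u : R} (hu : IsUnit u) (x : R) :
    IsUnit (u - π * x) := by
  by_contra h
  have h1 : u - π * x ∈ nonunits R := h
  have h2 : π * x ∈ nonunits R := fun hux => hπ.not_isUnit (isUnit_of_mul_isUnit_left hux)
  have h3 := IsLocalRing.nonunits_add h1 h2
  have h4 : u ∈ nonunits R := by simpa using h3
  exact h4 hu

theorem pow_assoc_inj {π : R} (hπ : Irreducible π) {s t : ℕ}
    (h : Associated (π ^ s) (π ^ t)) : s = t :=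
  le_antisymm ((pow_dvd_pow_iff hπ.ne_zero hπ.not_isUnit).mp h.dvd)
    ((pow_dvd_pow_iff hπ.ne_zero hπ.not_isUnit).mp h.symm.dvd)

theorem parity_lemma {π : R} (hπ : Irreducible π) {Δ : R} {m : ℕ} (hmodd : Odd m)
    (hm : Associated (π ^ m) Δ) {x y : R} (hy : y ≠ 0) : x ^ 2 ≠ y ^ 2 * Δ := by
  intro heq
  have hΔ : Δ ≠ 0 := by
    intro h0
    rw [h0] at hm
    exact pow_ne_zero m hπ.ne_zero (associated_zero_iff_eq_zero _ |>.mp hm)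
  have hx : x ≠ 0 := by
    intro h0
    rw [h0] at heq
    exact (mul_ne_zero (pow_ne_zero 2 hy) hΔ) (by rw [← heq]; ring)
  obtain ⟨p, hp⟩ := IsDiscreteValuationRing.associated_pow_irreducible hx hπ
  obtain ⟨q, hq⟩ := IsDiscreteValuationRing.associated_pow_irreducible hy hπ
  have e1 : Associated (π ^ (2 * p)) (x ^ 2) := by
    rw [mul_comm, pow_mul]; exact hp.symm.pow_pow
  have e2 : Associated (y ^ 2 * Δ) (π ^ (2 * q + m)) := by
    have : π ^ (2 * q + m) = (π ^ q) ^ 2 * π ^ m := by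
      rw [← pow_mul, ← pow_add, mul_comm q 2]
    rw [this]
    exact Associated.mul_mul hq.pow_pow hm.symm
  have h1 : Associated (π ^ (2 * p)) (π ^ (2 * q + m)) := (heq ▸ e1).trans e2
  have := pow_assoc_inj hπ h1
  obtain ⟨r, hr⟩ := hmodd
  omega


variable {a b a2 : R} {f : R[X]}

/-- the structure map -/
noncomputable def ii (f : R[X]) : R →+* R[X] ⧸ Ideal.span {f} :=
  algebraMap R (R[X] ⧸ Ideal.span {f})

/-- the root θ -/
noncomputable def th (f : R[X]) : R[X] ⧸ Ideal.span {f} := Ideal.Quotient.mk (Ideal.span {f}) X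

/-- η = θ - a/2 -/
noncomputable def et (f : R[X]) (a2 : R) : R[X] ⧸ Ideal.span {f} := th f - ii f a2

theorem ii_eq (f : R[X]) (x : R) : (algebraMap R (R[X] ⧸ Ideal.span {f})) x = ii f x := rfl

theorem th_eq (f : R[X]) : Ideal.Quotient.mk (Ideal.span {f}) X = th f := rfl

theorem et_eq (f : R[X]) (a2 : R) : et f a2 = th f - ii f a2 := rfl

theorem erep_ex (hf : f = X ^ 2 - C a * X - C b) (a2 : R) (z : R[X] ⧸ Ideal.span {f}) :
    ∃ c d : R, z = ii f c + ii f d * et f a2 := by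
  obtain ⟨c, d, h⟩ := rep_ex hf z
  simp only [ii_eq, th_eq] at h
  refine ⟨c + d * a2, d, ?_⟩
  rw [h, map_add, map_mul, et_eq]
  ring

theorem erep_unique (hf : f = X ^ 2 - C a * X - C b) (a2 : R) {c d : R}
    (h : ii f c + ii f d * et f a2 = 0) : c = 0 ∧ d = 0 := by
  have h' : algebraMap R (R[X] ⧸ Ideal.span {f}) (c - d * a2) +
      algebraMap R (R[X] ⧸ Ideal.span {f}) d * Ideal.Quotient.mk (Ideal.span {f}) X = 0 := by
    simp only [ii_eq, th_eq, map_sub, map_mul]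
    rw [← h, et_eq]
    ring
  obtain ⟨h1, h2⟩ := rep_unique hf h'
  subst h2
  simp at h1
  exact ⟨by simpa using h1, rfl⟩

theorem ii_inj (hf : f = X ^ 2 - C a * X - C b) {c : R} (h : ii f c = 0) : c = 0 :=
  (erep_unique hf 0 (by rw [map_zero, zero_mul, add_zero]; exact h)).1

theorem eta_sq (hf : f = X ^ 2 - C a * X - C b) (ha2 : a = 2 * a2) :
    et f a2 * et f a2 = ii f (a2 ^ 2 + b) := by
  have h1 := theta_sq hf
  simp only [ii_eq, th_eq] at h1
  have h2 : ii f a = ii f a2 + ii f a2 := by rw [ha2, two_mul, map_add]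
  rw [h2] at h1
  rw [et_eq, map_add, map_pow]
  linear_combination h1

/-- the standard ideals J(t,c) = (πᵗ, c + η) -/
noncomputable def Jtc (f : R[X]) (a2 : R) (π : R) (t : ℕ) (c : R) :
    Ideal (R[X] ⧸ Ideal.span {f}) :=
  Ideal.span {ii f (π ^ t), ii f c + et f a2}

theorem mem_Jtc (hf : f = X ^ 2 - C a * X - C b) (ha2 : a = 2 * a2)
    {π : R} {t : ℕ} {c : R} (hdvd : π ^ t ∣ ((a2 ^ 2 + b) - c ^ 2))
    (z : R[X] ⧸ Ideal.span {f}) :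
    z ∈ Jtc f a2 π t c ↔ ∃ r y : R, z = ii f (r * π ^ t) + ii f y * (ii f c + et f a2) := by
  constructor
  · intro hz
    rw [Jtc, Ideal.mem_span_pair] at hz
    obtain ⟨s1, s2, hs⟩ := hz
    obtain ⟨c1, d1, h1⟩ := erep_ex hf a2 s1
    obtain ⟨c2, d2, h2⟩ := erep_ex hf a2 s2
    obtain ⟨w, hw⟩ := hdvd
    refine ⟨c1 - d1 * c + d2 * w, d1 * π ^ t + c2 + d2 * c, ?_⟩
    have hwS : ii f (a2 ^ 2 + b) - ii f c * ii f c = ii f (π ^ t) * ii f w := by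
      rw [← map_mul, ← map_mul, ← map_sub]
      congr 1
      linear_combination hw
    have heta := eta_sq hf ha2
    rw [← hs, h1, h2]
    simp only [map_add, map_sub, map_mul]
    linear_combination (ii f d2) * heta + (ii f d2) * hwS
  · rintro ⟨r, y, rfl⟩
    rw [Jtc, Ideal.mem_span_pair]
    exact ⟨ii f r, ii f y, by rw [← map_mul]⟩

theorem Jtc_ne_bot (hf : f = X ^ 2 - C a * X - C b) {π : R} (hπ0 : π ≠ 0) (t : ℕ) (c : R) :
    Jtc f a2 π t c ≠ ⊥ := by
  intro hbot
  have h1 : ii f (π ^ t) ∈ Jtc f a2 π t c :=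
    Ideal.subset_span (Set.mem_insert _ _)
  rw [hbot, Ideal.mem_bot] at h1
  exact pow_ne_zero t hπ0 (ii_inj hf h1)


theorem extract (hf : f = X ^ 2 - C a * X - C b) (ha2 : a = 2 * a2)
    {π : R} (hπ : Irreducible π) {m : ℕ} (hmodd : Odd m)
    (hm : Associated (π ^ m) (a2 ^ 2 + b))
    (hdom : IsDomain (R[X] ⧸ Ideal.span {f}))
    {J : Ideal (R[X] ⧸ Ideal.span {f})} (hJ : J ≠ ⊥) :
    ∃ t c, π ^ t ∣ ((a2 ^ 2 + b) - c ^ 2) ∧ IRel J (Jtc f a2 π t c) := by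
  classical
  haveI := hdom
  have heta : (et f a2) * (et f a2) = ii f (a2 ^ 2 + b) := eta_sq hf ha2
  -- the ideal of η-coordinates of J
  let D : Ideal R :=
    { carrier := {d : R | ∃ c : R, ii f c + ii f d * (et f a2) ∈ J},
      add_mem' := by
        rintro x y ⟨cx, hx⟩ ⟨cy, hy⟩
        refine ⟨cx + cy, ?_⟩
        have h : ii f (cx + cy) + ii f (x + y) * (et f a2)
            = (ii f cx + ii f x * (et f a2)) + (ii f cy + ii f y * (et f a2)) := by
          rw [map_add, map_add]; ring
        rw [h]; exact J.add_mem hx hy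
      zero_mem' := ⟨0, by simp only [map_zero, zero_mul, add_zero]; exact J.zero_mem⟩
      smul_mem' := by
        rintro r x ⟨cx, hx⟩
        refine ⟨r * cx, ?_⟩
        have h : ii f (r * cx) + ii f (r • x) * (et f a2) = ii f r * (ii f cx + ii f x * (et f a2)) := by
          rw [smul_eq_mul, map_mul, map_mul]; ring
        rw [h]; exact J.mul_mem_left _ hx }
  have hD : ∀ d : R, d ∈ D ↔ ∃ c : R, ii f c + ii f d * (et f a2) ∈ J := fun d => Iff.rfl
  -- the ideal of "constants" in J
  let Ei : Ideal R :=
    { carrier := {r : R | ii f r ∈ J},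
      add_mem' := by
        intro x y hx hy
        show ii f (x + y) ∈ J
        rw [map_add]; exact J.add_mem hx hy
      zero_mem' := by show ii f 0 ∈ J; rw [map_zero]; exact J.zero_mem
      smul_mem' := by
        intro r x hx
        show ii f (r • x) ∈ J
        rw [smul_eq_mul, map_mul]; exact J.mul_mem_left _ hx }
  have hEi : ∀ r : R, r ∈ Ei ↔ ii f r ∈ J := fun r => Iff.rfl
  obtain ⟨g, hDg⟩ := (IsPrincipalIdealRing.principal D).principal
  obtain ⟨d0, hEd0⟩ := (IsPrincipalIdealRing.principal Ei).principal
  have hDmem : ∀ d : R, (∃ c : R, ii f c + ii f d * (et f a2) ∈ J) ↔ g ∣ d := by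
    intro d; rw [← hD, hDg]; exact Ideal.mem_span_singleton
  have hEmem : ∀ r : R, ii f r ∈ J ↔ d0 ∣ r := by
    intro r; rw [← hEi, hEd0]; exact Ideal.mem_span_singleton
  -- g ≠ 0
  have hgne : g ≠ 0 := by
    intro hg0
    obtain ⟨z, hzJ, hzne⟩ := Submodule.exists_mem_ne_zero_of_ne_bot hJ
    obtain ⟨c, d, rfl⟩ := erep_ex hf a2 z
    have hd : d = 0 := by
      have := (hDmem d).mp ⟨c, hzJ⟩
      rwa [hg0, zero_dvd_iff] at this
    have hc : c = 0 := by
      have hmul : ii f 0 + ii f c * (et f a2) ∈ J := by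
        have h : ii f 0 + ii f c * (et f a2) = (et f a2) * (ii f c + ii f d * (et f a2)) := by
          rw [hd]; simp only [map_zero, zero_mul, add_zero, zero_add]; ring
        rw [h]; exact J.mul_mem_left _ hzJ
      have := (hDmem c).mp ⟨0, hmul⟩
      rwa [hg0, zero_dvd_iff] at this
    exact hzne (by rw [hc, hd]; simp)
  -- pick y = c₀ + g·η ∈ J
  obtain ⟨c0, hy⟩ := (hDmem g).mpr dvd_rfl
  -- g ∣ c₀
  have hgc0 : g ∣ c0 := by
    apply (hDmem c0).mp
    refine ⟨g * (a2 ^ 2 + b), ?_⟩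
    have h : ii f (g * (a2 ^ 2 + b)) + ii f c0 * (et f a2) = (et f a2) * (ii f c0 + ii f g * (et f a2)) := by
      rw [map_mul]; linear_combination (-(ii f g)) * heta
    rw [h]; exact J.mul_mem_left _ hy
  obtain ⟨c1, hc1⟩ := hgc0
  rw [hc1] at hy
  -- g ∣ d0
  have hgd0 : g ∣ d0 := by
    apply (hDmem d0).mp
    refine ⟨0, ?_⟩
    have hd0J : ii f d0 ∈ J := (hEmem d0).mpr dvd_rfl
    have h : ii f 0 + ii f d0 * (et f a2) = ii f d0 * (et f a2) := by rw [map_zero, zero_add]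
    rw [h]; exact Ideal.mul_mem_right _ _ hd0J
  obtain ⟨d1, hd1⟩ := hgd0
  -- d0 ≠ 0 via the norm of y
  have hnormJ : ii f ((g * c1) ^ 2 - g ^ 2 * (a2 ^ 2 + b)) ∈ J := by
    have h : ii f ((g * c1) ^ 2 - g ^ 2 * (a2 ^ 2 + b))
        = (ii f (g * c1) + ii f g * (et f a2)) * (ii f (g * c1) - ii f g * (et f a2)) := by
      simp only [map_sub, map_mul, map_pow]
      linear_combination (ii f g * ii f g) * heta
    rw [h]; exact Ideal.mul_mem_right _ _ hy
  have hnormne : (g * c1) ^ 2 - g ^ 2 * (a2 ^ 2 + b) ≠ 0 := by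
    intro h0
    exact parity_lemma (x := g * c1) hπ hmodd hm hgne (by linear_combination h0)
  have hd0ne : d0 ≠ 0 :=
    ne_zero_of_dvd_ne_zero hnormne ((hEmem _).mp hnormJ)
  have hd1ne : d1 ≠ 0 := by
    intro h0; rw [h0, mul_zero] at hd1; exact hd0ne hd1
  -- d1 ∣ Δ - c1²
  have hkey : d1 ∣ (a2 ^ 2 + b) - c1 ^ 2 := by
    have hmemJ : ii f (g * ((a2 ^ 2 + b) - c1 ^ 2)) ∈ J := by
      have h : ii f (g * ((a2 ^ 2 + b) - c1 ^ 2))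
          = ((et f a2) - ii f c1) * (ii f (g * c1) + ii f g * (et f a2)) := by
        simp only [map_sub, map_mul, map_pow]
        linear_combination (-(ii f g)) * heta
      rw [h]; exact J.mul_mem_left _ hy
    have := (hEmem _).mp hmemJ
    rw [hd1] at this
    exact (mul_dvd_mul_iff_left hgne).mp this
  -- d1 = π^t · unit
  obtain ⟨t, ht⟩ := IsDiscreteValuationRing.associated_pow_irreducible hd1ne hπ
  obtain ⟨u, hu⟩ := ht
  have hw : d1 = π ^ t * (↑u⁻¹ : Rˣ) := by
    rw [← hu, mul_assoc, Units.mul_inv, mul_one]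
  refine ⟨t, c1, dvd_trans ⟨(↑u⁻¹ : Rˣ), by rw [← hw]⟩ hkey, ?_⟩
  -- J = (g·u⁻¹) · Jtc t c1
  set γ := ii f (g * (↑u⁻¹ : Rˣ)) with hγdef
  have hγne : γ ≠ 0 := by
    intro h0
    exact (mul_ne_zero hgne (Units.ne_zero u⁻¹)) (ii_inj hf h0)
  have hJeq : J = Ideal.span {γ} * Jtc f a2 π t c1 := by
    ext z
    constructor
    · intro hz
      obtain ⟨c, d, rfl⟩ := erep_ex hf a2 z
      obtain ⟨s, hs⟩ := (hDmem d).mp ⟨c, hz⟩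
      have hsub : ii f (c - s * (g * c1)) ∈ J := by
        have h : ii f (c - s * (g * c1))
            = (ii f c + ii f d * (et f a2)) - ii f s * (ii f (g * c1) + ii f g * (et f a2)) := by
          simp only [map_sub, map_mul, hs]
          ring
        rw [h]; exact J.sub_mem hz (J.mul_mem_left _ hy)
      obtain ⟨r, hr⟩ := (hEmem _).mp hsub
      rw [Ideal.mem_span_singleton_mul]
      refine ⟨ii f (r * π ^ t) + ii f (s * ↑u) * (ii f c1 + (et f a2)), ?_, ?_⟩
      · rw [Jtc, Ideal.mem_span_pair]
        exact ⟨ii f r, ii f (s * ↑u), by rw [← map_mul]⟩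
      · have huw : ii f ↑u * ii f (↑u⁻¹ : Rˣ) = 1 := by
          rw [← map_mul, Units.mul_inv, map_one]
        have hceq : c = d0 * r + s * (g * c1) := by linear_combination hr
        rw [hγdef, hceq, hs, hd1, hw]
        simp only [map_mul, map_add]
        linear_combination (ii f g * ii f s * (ii f c1 + et f a2)) * huw
    · intro hz
      rw [Ideal.mem_span_singleton_mul] at hz
      obtain ⟨w', hw'J, hγw'⟩ := hz
      rw [Jtc, Ideal.mem_span_pair] at hw'J
      obtain ⟨s1, s2, hs12⟩ := hw'J
      have h1 : γ * ii f (π ^ t) ∈ J := by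
        have h : γ * ii f (π ^ t) = ii f d0 := by
          rw [hγdef, ← map_mul, hd1, hw]; congr 1; ring
        rw [h]; exact (hEmem d0).mpr dvd_rfl
      have h2 : γ * (ii f c1 + (et f a2)) ∈ J := by
        have h : γ * (ii f c1 + (et f a2)) = ii f (↑u⁻¹ : Rˣ) * (ii f (g * c1) + ii f g * (et f a2)) := by
          rw [hγdef]; simp only [map_mul]; ring
        rw [h]; exact J.mul_mem_left _ hy
      have h3 : γ * w' = s1 * (γ * ii f (π ^ t)) + s2 * (γ * (ii f c1 + (et f a2))) := by
        rw [← hs12]; ring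
      rw [← hγw', h3]
      exact J.add_mem (J.mul_mem_left _ h1) (J.mul_mem_left _ h2)
  refine ⟨1, γ, one_ne_zero, hγne, ?_⟩
  rw [Ideal.span_singleton_one, Ideal.top_mul, hJeq]


theorem span_pair_eq_span_pair' {T : Type*} [CommRing T] {x1 y1 x2 y2 : T}
    (h1 : x1 ∈ Ideal.span ({x2, y2} : Set T)) (h2 : y1 ∈ Ideal.span ({x2, y2} : Set T))
    (h3 : x2 ∈ Ideal.span ({x1, y1} : Set T)) (h4 : y2 ∈ Ideal.span ({x1, y1} : Set T)) :
    Ideal.span ({x1, y1} : Set T) = Ideal.span ({x2, y2} : Set T) := by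
  apply le_antisymm <;> rw [Ideal.span_le] <;>
    refine Set.insert_subset_iff.mpr ⟨?_, Set.singleton_subset_iff.mpr ?_⟩ <;>
    assumption

theorem ic_sub_et_ne (hf : f = X ^ 2 - C a * X - C b) (a2 c : R) :
    ii f c - et f a2 ≠ 0 := by
  intro h
  have h' : ii f c + ii f (-1 : R) * et f a2 = 0 := by
    rw [map_neg, map_one]; linear_combination h
  have := (erep_unique hf a2 h').2
  simp at this

theorem et_ne (hf : f = X ^ 2 - C a * X - C b) (a2 : R) : et f a2 ≠ 0 := by
  intro h
  exact ic_sub_et_ne hf a2 0 (by rw [map_zero, zero_sub, h, neg_zero])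

theorem ii_ne (hf : f = X ^ 2 - C a * X - C b) {x : R} (hx : x ≠ 0) : ii f x ≠ 0 :=
  fun h => hx (ii_inj hf h)


theorem descent (hf : f = X ^ 2 - C a * X - C b) (ha2 : a = 2 * a2)
    {π : R} (hπ : Irreducible π) {m : ℕ} (hmodd : Odd m)
    (hm : Associated (π ^ m) (a2 ^ 2 + b))
    (hdom : IsDomain (R[X] ⧸ Ideal.span {f})) :
    ∀ t : ℕ, ∀ c : R, π ^ t ∣ ((a2 ^ 2 + b) - c ^ 2) →
      ∃ k, k ≤ m / 2 ∧ IRel (Jtc f a2 π t c) (Jtc f a2 π k 0) := by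
  haveI := hdom
  have heta : (et f a2) * (et f a2) = ii f (a2 ^ 2 + b) := eta_sq hf ha2
  obtain ⟨u, hu⟩ := hm  -- π^m * u = a2^2+b
  obtain ⟨mh, hmh⟩ := hmodd  -- m = 2*mh+1
  have hm2 : m / 2 = mh := by omega
  intro t
  induction t using Nat.strong_induction_on with
  | _ t ih =>
  intro c hdvd
  by_cases hc : π ^ t ∣ c
  · -- Case A : J(t,c) = J(t,0)
    obtain ⟨x, hx⟩ := hc
    have hic : ii f c = ii f (π ^ t) * ii f x := by rw [← map_mul, ← hx]
    have hJeq : Jtc f a2 π t c = Jtc f a2 π t 0 := by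
      rw [Jtc, Jtc, map_zero, zero_add]
      apply span_pair_eq_span_pair'
      · exact Ideal.mem_span_pair.mpr ⟨1, 0, by ring⟩
      · exact Ideal.mem_span_pair.mpr ⟨ii f x, 1, by rw [one_mul]; linear_combination - hic⟩
      · exact Ideal.mem_span_pair.mpr ⟨1, 0, by ring⟩
      · exact Ideal.mem_span_pair.mpr ⟨-(ii f x), 1, by rw [one_mul]; linear_combination hic⟩
    have htm : t ≤ m := by
      have h1 : π ^ t ∣ (a2 ^ 2 + b) := by
        have hc2 : π ^ t ∣ c ^ 2 := dvd_pow (⟨x, hx⟩ : π ^ t ∣ c) two_ne_zero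
        have h2 := dvd_add hdvd hc2
        rwa [sub_add_cancel] at h2
      rw [← hu] at h1
      have h3 : π ^ t ∣ π ^ m := (Units.dvd_mul_right).mp h1
      exact (pow_dvd_pow_iff hπ.ne_zero hπ.not_isUnit).mp h3
    by_cases hth : t ≤ m / 2
    · exact ⟨t, hth, hJeq ▸ IRel.refl _⟩
    · refine ⟨m - t, by omega, ?_⟩
      rw [hJeq]
      refine ⟨et f a2, ii f (π ^ t), et_ne hf a2, ii_ne hf (pow_ne_zero t hπ.ne_zero), ?_⟩
      rw [Jtc, Jtc, map_zero, zero_add,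
        span_singleton_mul_span_pair_s16, span_singleton_mul_span_pair_s16]
      have hPw : ii f (π ^ t) * ii f (π ^ (m - t)) = ii f (π ^ m) := by
        rw [← map_mul, ← pow_add]; congr 2; omega
      have hDu : ii f (π ^ m) * ii f (↑u : R) = ii f (a2 ^ 2 + b) := by
        rw [← map_mul, hu]
      have hUu : ii f (↑u : R) * ii f (↑u⁻¹ : R) = 1 := by
        rw [← map_mul, Units.mul_inv, map_one]
      apply span_pair_eq_span_pair'
      · exact Ideal.mem_span_pair.mpr ⟨0, 1, by ring⟩
      · exact Ideal.mem_span_pair.mpr ⟨ii f (↑u : R), 0,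
          by linear_combination (ii f (↑u : R)) * hPw + hDu - heta⟩
      · exact Ideal.mem_span_pair.mpr ⟨0, ii f (↑u⁻¹ : R),
          by linear_combination (ii f (↑u⁻¹ : R)) * heta - (ii f (↑u⁻¹ : R)) * hDu
            + (ii f (π ^ m)) * hUu - hPw⟩
      · exact Ideal.mem_span_pair.mpr ⟨1, 0, by ring⟩
  · -- Case B : reduce t
    have hcne : c ≠ 0 := fun h0 => hc (h0 ▸ dvd_zero _)
    obtain ⟨p, hp⟩ := IsDiscreteValuationRing.associated_pow_irreducible hcne hπ
    obtain ⟨v, hv⟩ := hp  -- c * v = π^p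
    have hcv : c = π ^ p * (↑v⁻¹ : R) := by
      rw [← hv, mul_assoc, Units.mul_inv, mul_one]
    have hpt : p < t := by
      by_contra hle
      push_neg at hle
      exact hc (dvd_trans (pow_dvd_pow π hle) ⟨(↑v⁻¹ : R), hcv⟩)
    have h2pm : 2 * p ≠ m := by omega
    -- construct w and the unit εu with Δ - c² = π^w * εu
    obtain ⟨w, εu, hwe, hw2p, hwm⟩ :
        ∃ (w : ℕ) (εu : Rˣ), (a2 ^ 2 + b) - c ^ 2 = π ^ w * (↑εu : R)
          ∧ w ≤ 2 * p ∧ w ≤ m := by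
      rcases lt_or_gt_of_ne h2pm with h2p | h2p
      · -- w = 2p
        have hunit : IsUnit ((↑v⁻¹ : R) ^ 2 - π * (π ^ (m - 2 * p - 1) * ↑u)) :=
          unit_sub hπ ((v⁻¹.isUnit).pow 2) _
        have hunit' : IsUnit (π ^ (m - 2 * p) * (↑u : R) - (↑v⁻¹ : R) ^ 2) := by
          have h := hunit.neg
          have heq : -((↑v⁻¹ : R) ^ 2 - π * (π ^ (m - 2 * p - 1) * ↑u))
              = π ^ (m - 2 * p) * (↑u : R) - (↑v⁻¹ : R) ^ 2 := by
            have e2 : (π : R) ^ (m - 2 * p) = π * π ^ (m - 2 * p - 1) := by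
              rw [← pow_succ']; congr 1; omega
            rw [e2]; ring
          rwa [heq] at h
        obtain ⟨εu, hεu⟩ := hunit'
        refine ⟨2 * p, εu, ?_, le_refl _, by omega⟩
        rw [hεu]
        have e1 : (π : R) ^ m = (π ^ p) ^ 2 * π ^ (m - 2 * p) := by
          rw [← pow_mul, ← pow_add]; congr 1; omega
        rw [← hu, hcv, e1]
        have e3 : (π : R) ^ (2 * p) = (π ^ p) ^ 2 := by rw [← pow_mul, mul_comm]
        rw [e3]; ring
      · -- w = m
        have hunit : IsUnit ((↑u : R) - π * (π ^ (2 * p - m - 1) * (↑v⁻¹ : R) ^ 2)) :=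
          unit_sub hπ u.isUnit _
        have hunit' : IsUnit ((↑u : R) - π ^ (2 * p - m) * (↑v⁻¹ : R) ^ 2) := by
          have heq : (↑u : R) - π * (π ^ (2 * p - m - 1) * (↑v⁻¹ : R) ^ 2)
              = (↑u : R) - π ^ (2 * p - m) * (↑v⁻¹ : R) ^ 2 := by
            have e2 : (π : R) ^ (2 * p - m) = π * π ^ (2 * p - m - 1) := by
              rw [← pow_succ']; congr 1; omega
            rw [e2]; ring
          rwa [heq] at hunit
        obtain ⟨εu, hεu⟩ := hunit'
        refine ⟨m, εu, ?_, by omega, le_refl _⟩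
        rw [hεu]
        have e1 : ((π : R) ^ p) ^ 2 = π ^ m * π ^ (2 * p - m) := by
          rw [← pow_mul, ← pow_add]; congr 1; omega
        rw [← hu, hcv]
        calc π ^ m * (↑u : R) - (π ^ p * (↑v⁻¹ : R)) ^ 2
            = π ^ m * (↑u : R) - (π ^ p) ^ 2 * (↑v⁻¹ : R) ^ 2 := by ring
          _ = π ^ m * ((↑u : R) - π ^ (2 * p - m) * (↑v⁻¹ : R) ^ 2) := by rw [e1]; ring
    have htw : t ≤ w := by
      have h1 : π ^ t ∣ π ^ w * (↑εu : R) := hwe ▸ hdvd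
      exact (pow_dvd_pow_iff hπ.ne_zero hπ.not_isUnit).mp ((Units.dvd_mul_right).mp h1)
    have htlt : w - t < t := by omega
    have hdvd' : π ^ (w - t) ∣ ((a2 ^ 2 + b) - (-c) ^ 2) := by
      refine ⟨π ^ t * (↑εu : R), ?_⟩
      have e3 : (π : R) ^ w = π ^ (w - t) * π ^ t := by rw [← pow_add]; congr 1; omega
      rw [neg_sq, hwe, e3]
      ring
    obtain ⟨k, hk, hrel⟩ := ih (w - t) htlt (-c) hdvd'
    refine ⟨k, hk, IRel.trans ?_ hrel⟩
    refine ⟨ii f c - et f a2, ii f (π ^ t), ic_sub_et_ne hf a2 c,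
      ii_ne hf (pow_ne_zero t hπ.ne_zero), ?_⟩
    rw [Jtc, Jtc, span_singleton_mul_span_pair_s16, span_singleton_mul_span_pair_s16]
    have hPw : ii f (π ^ t) * ii f (π ^ (w - t)) = ii f (π ^ w) := by
      rw [← map_mul, ← pow_add]; congr 2; omega
    have hwS : ii f (a2 ^ 2 + b) - ii f c * ii f c = ii f (π ^ w) * ii f (↑εu : R) := by
      rw [← map_mul, ← map_mul, ← map_sub]; congr 1; linear_combination hwe
    have hUε : ii f (↑εu : R) * ii f (↑εu⁻¹ : R) = 1 := by
      rw [← map_mul, Units.mul_inv, map_one]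
    apply span_pair_eq_span_pair'
    · refine Ideal.mem_span_pair.mpr ⟨0, -1, ?_⟩
      rw [map_neg]; ring
    · refine Ideal.mem_span_pair.mpr ⟨-(ii f (↑εu : R)), 0, ?_⟩
      linear_combination (-(ii f (↑εu : R))) * hPw + hwS + heta
    · refine Ideal.mem_span_pair.mpr ⟨0, -(ii f (↑εu⁻¹ : R)), ?_⟩
      linear_combination (-1 : R[X] ⧸ Ideal.span {f}) * hPw + (ii f (↑εu⁻¹ : R)) * hwS
        + (ii f (↑εu⁻¹ : R)) * heta + (ii f (π ^ w)) * hUε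
    · refine Ideal.mem_span_pair.mpr ⟨-1, 0, ?_⟩
      rw [map_neg]; ring


noncomputable def sig (hf : f = X ^ 2 - C a * X - C b) :
    (R[X] ⧸ Ideal.span {f}) →+* (R[X] ⧸ Ideal.span {f}) :=
  Ideal.Quotient.lift (Ideal.span {f}) (eval₂RingHom (ii f) (ii f a - th f)) (by
    intro p hp
    rw [Ideal.mem_span_singleton] at hp
    obtain ⟨q, rfl⟩ := hp
    rw [coe_eval₂RingHom, eval₂_mul]
    have hf0 : eval₂ (ii f) (ii f a - th f) f = 0 := by
      have hstep : eval₂ (ii f) (ii f a - th f) f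
          = eval₂ (ii f) (ii f a - th f) (X ^ 2 - C a * X - C b) := congrArg _ hf
      rw [hstep]
      simp only [eval₂_sub, eval₂_pow, eval₂_mul, eval₂_X, eval₂_C]
      have h1 := theta_sq hf
      simp only [ii_eq, th_eq] at h1
      linear_combination h1
    rw [hf0, zero_mul])

theorem sig_ii (hf : f = X ^ 2 - C a * X - C b) (r : R) : sig hf (ii f r) = ii f r := by
  show Ideal.Quotient.lift _ _ _ (Ideal.Quotient.mk _ (C r)) = _
  rw [Ideal.Quotient.lift_mk, coe_eval₂RingHom, eval₂_C]

theorem sig_th (hf : f = X ^ 2 - C a * X - C b) : sig hf (th f) = ii f a - th f := by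
  show Ideal.Quotient.lift _ _ _ (Ideal.Quotient.mk _ X) = _
  rw [Ideal.Quotient.lift_mk, coe_eval₂RingHom, eval₂_X]

theorem sig_et (hf : f = X ^ 2 - C a * X - C b) (ha2 : a = 2 * a2) :
    sig hf (et f a2) = - et f a2 := by
  rw [et_eq, map_sub, sig_th, sig_ii]
  have h : ii f a = ii f a2 + ii f a2 := by rw [ha2, two_mul, map_add]
  rw [h]; ring

theorem sig_Ik (hf : f = X ^ 2 - C a * X - C b) (ha2 : a = 2 * a2) (π : R) (k : ℕ) :
    Ideal.map (sig hf) (Jtc f a2 π k 0) = Jtc f a2 π k 0 := by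
  rw [Jtc, map_zero, zero_add, Ideal.map_span, Set.image_insert_eq, Set.image_singleton,
    sig_ii, sig_et hf ha2]
  apply span_pair_eq_span_pair'
  · exact Ideal.mem_span_pair.mpr ⟨1, 0, by ring⟩
  · exact Ideal.mem_span_pair.mpr ⟨0, -1, by ring⟩
  · exact Ideal.mem_span_pair.mpr ⟨1, 0, by ring⟩
  · exact Ideal.mem_span_pair.mpr ⟨0, -1, by ring⟩

theorem sig_norm (hf : f = X ^ 2 - C a * X - C b) (ha2 : a = 2 * a2)
    {π : R} (hπ : Irreducible π) {m : ℕ} (hmodd : Odd m)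
    (hm : Associated (π ^ m) (a2 ^ 2 + b))
    (hdom : IsDomain (R[X] ⧸ Ideal.span {f}))
    (α : R[X] ⧸ Ideal.span {f}) (hα : α ≠ 0) :
    ∃ n : R, α * sig hf α = ii f n ∧ n ≠ 0 := by
  haveI := hdom
  obtain ⟨c, d, rfl⟩ := erep_ex hf a2 α
  have hσ : sig hf (ii f c + ii f d * et f a2) = ii f c - ii f d * et f a2 := by
    rw [map_add, map_mul, sig_ii, sig_ii, sig_et hf ha2]; ring
  refine ⟨c ^ 2 - d ^ 2 * (a2 ^ 2 + b), ?_, ?_⟩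
  · rw [hσ]
    have heta := eta_sq hf ha2
    simp only [map_sub, map_mul, map_pow, map_add]
    have hA : ii f (a2 ^ 2 + b) = ii f a2 ^ 2 + ii f b := by rw [map_add, map_pow]
    linear_combination (-(ii f d * ii f d)) * heta - (ii f d * ii f d) * hA
  · intro h0
    by_cases hd : d = 0
    · rw [hd] at h0 hα
      have hc : c = 0 := by
        have hcc : c ^ 2 = 0 := by linear_combination h0
        exact pow_eq_zero_iff two_ne_zero |>.mp hcc
      rw [hc] at hα
      simp at hα
    · exact parity_lemma (x := c) hπ hmodd hm hd (by linear_combination h0)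

theorem Ik_sq (hf : f = X ^ 2 - C a * X - C b) (ha2 : a = 2 * a2)
    {π : R} {m : ℕ} (hmodd : Odd m) (hm : Associated (π ^ m) (a2 ^ 2 + b))
    {k : ℕ} (hk : k ≤ m / 2) :
    Jtc f a2 π k 0 * Jtc f a2 π k 0 = Ideal.span {ii f (π ^ k)} * Jtc f a2 π k 0 := by
  obtain ⟨u, hu⟩ := hm
  obtain ⟨mh, hmh⟩ := hmodd
  have heta := eta_sq hf ha2
  have hπk : ii f (π ^ k) ∈ Jtc f a2 π k 0 := by
    rw [Jtc]; exact Ideal.subset_span (Set.mem_insert _ _)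
  have hηmem : et f a2 ∈ Jtc f a2 π k 0 := by
    rw [Jtc]
    exact Ideal.mem_span_pair.mpr ⟨0, 1, by rw [map_zero, zero_add]; ring⟩
  apply le_antisymm
  · rw [Ideal.mul_le]
    intro r hr s hs
    rw [Jtc, Ideal.mem_span_pair] at hr
    obtain ⟨s1, s2, hs12⟩ := hr
    have h1 : ii f (π ^ k) * s ∈ Ideal.span {ii f (π ^ k)} * Jtc f a2 π k 0 :=
      Ideal.mul_mem_mul (Ideal.mem_span_singleton_self _) hs
    have h2 : et f a2 * s ∈ Ideal.span {ii f (π ^ k)} * Jtc f a2 π k 0 := by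
      rw [Jtc, Ideal.mem_span_pair] at hs
      obtain ⟨t1, t2, ht12⟩ := hs
      have hη2 : et f a2 * et f a2 ∈ Ideal.span {ii f (π ^ k)} * Jtc f a2 π k 0 := by
        rw [heta]
        have hdec : ii f (a2 ^ 2 + b) = ii f (π ^ k) * (ii f (π ^ (m - 2 * k) * ↑u) * ii f (π ^ k)) := by
          rw [← map_mul, ← map_mul, ← hu]
          congr 1
          have hmk : (π : R) ^ m = π ^ k * π ^ (m - 2 * k) * π ^ k := by
            rw [← pow_add, ← pow_add]; congr 1; omega
          rw [hmk]; ring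
        rw [hdec]
        refine Ideal.mul_mem_mul (Ideal.mem_span_singleton_self _) ?_
        exact Ideal.mul_mem_left _ _ hπk
      have hπη : ii f (π ^ k) * et f a2 ∈ Ideal.span {ii f (π ^ k)} * Jtc f a2 π k 0 :=
        Ideal.mul_mem_mul (Ideal.mem_span_singleton_self _) hηmem
      have heq : et f a2 * s = t1 * (ii f (π ^ k) * et f a2) + t2 * (et f a2 * et f a2) := by
        rw [← ht12, map_zero, zero_add]; ring
      rw [heq]
      exact Ideal.add_mem _ (Ideal.mul_mem_left _ _ hπη) (Ideal.mul_mem_left _ _ hη2)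
    have heq2 : r * s = s1 * (ii f (π ^ k) * s) + s2 * (et f a2 * s) := by
      rw [← hs12, map_zero, zero_add]; ring
    rw [heq2]
    exact Ideal.add_mem _ (Ideal.mul_mem_left _ _ h1) (Ideal.mul_mem_left _ _ h2)
  · exact Ideal.mul_mono (Ideal.span_le.mpr (Set.singleton_subset_iff.mpr hπk)) le_rfl


theorem Ik_inj (hf : f = X ^ 2 - C a * X - C b) (ha2 : a = 2 * a2)
    {π : R} (hπ : Irreducible π) {m : ℕ} (hmodd : Odd m)
    (hm : Associated (π ^ m) (a2 ^ 2 + b))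
    (hdom : IsDomain (R[X] ⧸ Ideal.span {f}))
    {k l : ℕ} (hk : k ≤ m / 2) (hl : l ≤ m / 2)
    (hrel : IRel (Jtc f a2 π k 0) (Jtc f a2 π l 0)) : k = l := by
  haveI := hdom
  obtain ⟨u, hu⟩ := hm
  obtain ⟨α, β, hα, hβ, heq⟩ := hrel
  obtain ⟨nα, hnα, hnα0⟩ := sig_norm hf ha2 hπ hmodd ⟨u, hu⟩ hdom α hα
  obtain ⟨nβ, hnβ, hnβ0⟩ := sig_norm hf ha2 hπ hmodd ⟨u, hu⟩ hdom β hβ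
  obtain ⟨mh, hmh⟩ := hmodd
  have heq2 : Ideal.span {sig hf α} * Jtc f a2 π k 0
      = Ideal.span {sig hf β} * Jtc f a2 π l 0 := by
    have h := congrArg (Ideal.map (sig hf)) heq
    rwa [Ideal.map_mul, Ideal.map_mul, Ideal.map_span, Ideal.map_span,
      Set.image_singleton, Set.image_singleton, sig_Ik hf ha2, sig_Ik hf ha2] at h
  have hmul : Ideal.span {ii f (nα * π ^ k)} * Jtc f a2 π k 0
      = Ideal.span {ii f (nβ * π ^ l)} * Jtc f a2 π l 0 := by
    have h : (Ideal.span {α} * Jtc f a2 π k 0) * (Ideal.span {sig hf α} * Jtc f a2 π k 0)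
        = (Ideal.span {β} * Jtc f a2 π l 0) * (Ideal.span {sig hf β} * Jtc f a2 π l 0) := by
      rw [heq, heq2]
    have hL : (Ideal.span {α} * Jtc f a2 π k 0) * (Ideal.span {sig hf α} * Jtc f a2 π k 0)
        = (Ideal.span {α} * Ideal.span {sig hf α}) * (Jtc f a2 π k 0 * Jtc f a2 π k 0) := by
      ring
    have hR : (Ideal.span {β} * Jtc f a2 π l 0) * (Ideal.span {sig hf β} * Jtc f a2 π l 0)
        = (Ideal.span {β} * Ideal.span {sig hf β}) * (Jtc f a2 π l 0 * Jtc f a2 π l 0) := by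
      ring
    rw [hL, hR, Ideal.span_singleton_mul_span_singleton,
      Ideal.span_singleton_mul_span_singleton, hnα, hnβ,
      Ik_sq hf ha2 ⟨mh, hmh⟩ ⟨u, hu⟩ hk, Ik_sq hf ha2 ⟨mh, hmh⟩ ⟨u, hu⟩ hl,
      ← mul_assoc, ← mul_assoc,
      Ideal.span_singleton_mul_span_singleton, Ideal.span_singleton_mul_span_singleton,
      ← map_mul, ← map_mul] at h
    exact h
  have hr0 : nα * π ^ k ≠ 0 := mul_ne_zero hnα0 (pow_ne_zero _ hπ.ne_zero)
  have hs0 : nβ * π ^ l ≠ 0 := mul_ne_zero hnβ0 (pow_ne_zero _ hπ.ne_zero)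
  have hdvd0 : ∀ j, j ≤ m → π ^ j ∣ ((a2 ^ 2 + b) - 0 ^ 2) := by
    intro j hj
    refine ⟨π ^ (m - j) * ↑u, ?_⟩
    have hmj : (π : R) ^ m = π ^ j * π ^ (m - j) := by rw [← pow_add]; congr 1; omega
    rw [← hu, hmj]; ring
  have hmem : ∀ (j : ℕ), j ≤ m → ∀ (x : R) (z : R[X] ⧸ Ideal.span {f}),
      z ∈ Ideal.span {ii f x} * Jtc f a2 π j 0 ↔
      ∃ cc dd : R, z = ii f (x * (cc * π ^ j)) + ii f (x * dd) * et f a2 := by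
    intro j hj x z
    rw [Ideal.mem_span_singleton_mul]
    constructor
    · rintro ⟨w, hw, rfl⟩
      rw [mem_Jtc hf ha2 (hdvd0 j hj)] at hw
      obtain ⟨cc, dd, rfl⟩ := hw
      exact ⟨cc, dd, by simp only [map_zero, zero_add, map_mul]; ring⟩
    · rintro ⟨cc, dd, rfl⟩
      refine ⟨ii f (cc * π ^ j) + ii f dd * (ii f 0 + et f a2), ?_, ?_⟩
      · rw [mem_Jtc hf ha2 (hdvd0 j hj)]; exact ⟨cc, dd, rfl⟩
      · simp only [map_zero, zero_add, map_mul]; ring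
  have hkm : k ≤ m := by omega
  have hlm : l ≤ m := by omega
  have hdvd_of : ∀ (x y : R) (j1 j2 : ℕ), j1 ≤ m → j2 ≤ m →
      Ideal.span {ii f x} * Jtc f a2 π j1 0 = Ideal.span {ii f y} * Jtc f a2 π j2 0 →
      (x ∣ y) ∧ (x * π ^ j1 ∣ y * π ^ j2) := by
    intro x y j1 j2 hj1 hj2 hXY
    constructor
    · have hset : ii f y * et f a2 ∈ Ideal.span {ii f x} * Jtc f a2 π j1 0 := by
        rw [hXY, hmem j2 hj2 y]
        exact ⟨0, 1, by simp only [zero_mul, mul_zero, map_zero, zero_add, mul_one]⟩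
      rw [hmem j1 hj1 x] at hset
      obtain ⟨cc, dd, hcd⟩ := hset
      have h0 : ii f (x * (cc * π ^ j1)) + ii f (x * dd - y) * et f a2 = 0 := by
        simp only [map_sub]; linear_combination - hcd
      have h2 := (erep_unique hf a2 h0).2
      exact ⟨dd, by linear_combination - h2⟩
    · have hset : ii f (y * π ^ j2) ∈ Ideal.span {ii f x} * Jtc f a2 π j1 0 := by
        rw [hXY, hmem j2 hj2 y]
        exact ⟨1, 0, by simp only [one_mul, mul_zero, map_zero, add_zero, zero_mul]⟩
      rw [hmem j1 hj1 x] at hset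
      obtain ⟨cc, dd, hcd⟩ := hset
      have h0 : ii f (x * (cc * π ^ j1) - y * π ^ j2) + ii f (x * dd) * et f a2 = 0 := by
        simp only [map_sub]; linear_combination - hcd
      have h1 := (erep_unique hf a2 h0).1
      exact ⟨cc, by linear_combination - h1⟩
  obtain ⟨hd1, hd2⟩ := hdvd_of _ _ k l hkm hlm hmul
  obtain ⟨hd3, hd4⟩ := hdvd_of _ _ l k hlm hkm hmul.symm
  have hass1 : Associated (nα * π ^ k) (nβ * π ^ l) := associated_of_dvd_dvd hd1 hd3
  have hass2 : Associated ((nα * π ^ k) * π ^ k) ((nβ * π ^ l) * π ^ l) :=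
    associated_of_dvd_dvd hd2 hd4
  have hass3 : Associated (π ^ k) (π ^ l) := Associated.of_mul_left hass2 hass1 hr0
  exact pow_assoc_inj hπ hass3


theorem Ik_carrier (hf : f = X ^ 2 - C a * X - C b) (ha2 : a = 2 * a2)
    {π : R} {m : ℕ} (hm : Associated (π ^ m) (a2 ^ 2 + b)) {k : ℕ} (hk : k ≤ m) :
    ((Jtc f a2 π k 0 : Ideal (R[X] ⧸ Ideal.span {f})) : Set (R[X] ⧸ Ideal.span {f}))
      = ((Submodule.span R {ii f (π ^ k), et f a2} :
          Submodule R (R[X] ⧸ Ideal.span {f})) : Set (R[X] ⧸ Ideal.span {f})) := by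
  obtain ⟨u, hu⟩ := hm
  have hdvd0 : π ^ k ∣ ((a2 ^ 2 + b) - 0 ^ 2) := by
    refine ⟨π ^ (m - k) * ↑u, ?_⟩
    have hmj : (π : R) ^ m = π ^ k * π ^ (m - k) := by rw [← pow_add]; congr 1; omega
    rw [← hu, hmj]; ring
  have hsmul : ∀ (c : R) (z : R[X] ⧸ Ideal.span {f}), c • z = ii f c * z :=
    fun c z => Algebra.smul_def c z
  ext z
  simp only [SetLike.mem_coe]
  rw [mem_Jtc hf ha2 hdvd0, Submodule.mem_span_pair]
  constructor
  · rintro ⟨r, y, rfl⟩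
    refine ⟨r, y, ?_⟩
    rw [hsmul, hsmul]
    simp only [map_zero, zero_add, map_mul]
  · rintro ⟨r, y, rfl⟩
    refine ⟨r, y, ?_⟩
    rw [hsmul, hsmul]
    simp only [map_zero, zero_add, map_mul]

end St16

open St16

theorem ideal_classes_two_not_unit_odd_valuation
    (R : Type*) [CommRing R] [IsDomain R] [IsDiscreteValuationRing R]
    (K : Type*) [Field K] [Algebra R K] [IsFractionRing R K]
    (π : R) (hπ : Irreducible π)
    (e : ℕ) (he : 0 < e) (h2 : Associated (π ^ e) (2 : R))
    (a b : R) (ha : π ^ e ∣ a) (a2 : R) (ha2 : a = 2 * a2)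
    (f : R[X]) (hf : f = X ^ 2 - C a * X - C b)
    (hirr : Irreducible (f.map (algebraMap R K)))
    (θ : R[X] ⧸ Ideal.span {f}) (hθ : θ = Ideal.Quotient.mk (Ideal.span {f}) X)
    (m : ℕ) (hmodd : Odd m) (hm : Associated (π ^ m) (a2 ^ 2 + b)) :
    (∀ J : Ideal (R[X] ⧸ Ideal.span {f}), J ≠ ⊥ →
      ∃! k : ℕ, k ≤ m / 2 ∧
        ∃ J' : Ideal (R[X] ⧸ Ideal.span {f}),
          (J' : Set (R[X] ⧸ Ideal.span {f})) =
            (Submodule.span R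
              {algebraMap R (R[X] ⧸ Ideal.span {f}) (π ^ k),
                θ - algebraMap R (R[X] ⧸ Ideal.span {f}) a2} :
              Submodule R (R[X] ⧸ Ideal.span {f})) ∧
          ∃ α₁ α₂ : R[X] ⧸ Ideal.span {f}, α₁ ≠ 0 ∧ α₂ ≠ 0 ∧
            Ideal.span {α₁} * J = Ideal.span {α₂} * J') ∧
    Nat.card
      (Quot (fun (J₁ J₂ : {J : Ideal (R[X] ⧸ Ideal.span {f}) // J ≠ ⊥}) =>
        ∃ α₁ α₂ : R[X] ⧸ Ideal.span {f}, α₁ ≠ 0 ∧ α₂ ≠ 0 ∧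
          Ideal.span {α₁} * J₁.1 = Ideal.span {α₂} * J₂.1)) = m / 2 + 1 := by
  have hdom : IsDomain (R[X] ⧸ Ideal.span {f}) := quot_domain hf hirr
  haveI := hdom
  obtain ⟨mh, hmh⟩ := hmodd
  have hθη : θ - algebraMap R (R[X] ⧸ Ideal.span {f}) a2 = et f a2 := by rw [hθ]; rfl
  have halg : ∀ x : R, algebraMap R (R[X] ⧸ Ideal.span {f}) x = ii f x := fun _ => rfl
  -- main classification
  have hmain : ∀ J : Ideal (R[X] ⧸ Ideal.span {f}), J ≠ ⊥ →
      ∃ k, k ≤ m / 2 ∧ IRel J (Jtc f a2 π k 0) := by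
    intro J hJ
    obtain ⟨t, c, hdvd, hrel1⟩ := extract hf ha2 hπ ⟨mh, hmh⟩ hm hdom hJ
    obtain ⟨k, hk, hrel2⟩ := descent hf ha2 hπ ⟨mh, hmh⟩ hm hdom t c hdvd
    exact ⟨k, hk, hrel1.trans hrel2⟩
  constructor
  · intro J hJ
    obtain ⟨k, hk, hrel⟩ := hmain J hJ
    obtain ⟨α₁, α₂, hα₁, hα₂, heq⟩ := id hrel
    refine ⟨k, ⟨hk, Jtc f a2 π k 0, ?_, α₁, α₂, hα₁, hα₂, heq⟩, ?_⟩
    · rw [hθη, halg]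
      exact Ik_carrier hf ha2 hm (by omega)
    · rintro k' ⟨hk', J', hcar', α₁', α₂', h1', h2', heq'⟩
      rw [hθη, halg] at hcar'
      have hJ' : J' = Jtc f a2 π k' 0 :=
        SetLike.coe_injective (hcar'.trans (Ik_carrier hf ha2 hm (by omega)).symm)
      have hrel' : IRel J (Jtc f a2 π k' 0) :=
        ⟨α₁', α₂', h1', h2', by rw [← hJ']; exact heq'⟩
      exact Ik_inj hf ha2 hπ ⟨mh, hmh⟩ hm hdom hk' hk (hrel'.symm.trans hrel)
  · set r := (fun (J₁ J₂ : {J : Ideal (R[X] ⧸ Ideal.span {f}) // J ≠ ⊥}) =>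
        ∃ α₁ α₂ : R[X] ⧸ Ideal.span {f}, α₁ ≠ 0 ∧ α₂ ≠ 0 ∧
          Ideal.span {α₁} * J₁.1 = Ideal.span {α₂} * J₂.1) with hrdef
    have hrIRel : ∀ J₁ J₂, r J₁ J₂ ↔ IRel J₁.1 J₂.1 := fun _ _ => Iff.rfl
    have hequiv : Equivalence r :=
      ⟨fun J => IRel.refl J.1, fun h => IRel.symm h, fun h h' => IRel.trans h h'⟩
    let F : Fin (m / 2 + 1) → Quot r := fun k =>
      Quot.mk r ⟨Jtc f a2 π k.1 0, Jtc_ne_bot hf hπ.ne_zero k.1 0⟩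
    have hFbij : Function.Bijective F := by
      constructor
      · intro k₁ k₂ hFk
        have h := Quot.eq.mp hFk
        have hr := (hequiv.eqvGen_iff).mp h
        have := Ik_inj hf ha2 hπ ⟨mh, hmh⟩ hm hdom
          (by omega : (k₁ : ℕ) ≤ m / 2) (by omega : (k₂ : ℕ) ≤ m / 2) hr
        exact Fin.ext this
      · intro q
        obtain ⟨⟨J, hJne⟩, rfl⟩ := q.exists_rep
        obtain ⟨k, hk, hrel⟩ := hmain J hJne
        refine ⟨⟨k, by omega⟩, ?_⟩
        exact Quot.sound hrel.symm
    rw [← Nat.card_eq_of_bijective F hFbij]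
    simp
end

section
/- Let R be a discrete valuation ring of characteristic 2 with uniformizer π and valuation v, and let f(x) = x² − ax − b ∈ R[x] be monic irreducible over the fraction field K and separable (so a ≠ 0). Let m be the maximal integer in {0, 1, …, v(a)} such that v(b − r(r + a)) ≥ 2m for some r ∈ R, and fix r ∈ R with v(b − r(r + a)) ≥ 2m. Then every matrix A ∈ Mat_2(R) with characteristic polynomial f is similar over R to exactly one of the matrices [[−r, πⁱ],[(b − r(r + a))/πⁱ, a + r]] with 0 ≤ i ≤ m. -/
open Polynomial

private lemma dvd_entries_mul' {R : Type*} [CommRing R] (g : R)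
    (P N Q : Matrix (Fin 2) (Fin 2) R) (h : ∀ k l, g ∣ N k l) (k l : Fin 2) :
    g ∣ (P * N * Q) k l := by
  rw [Matrix.mul_apply]
  refine Finset.dvd_sum fun v _ => ?_
  refine Dvd.dvd.mul_right ?_ _
  rw [Matrix.mul_apply]
  exact Finset.dvd_sum fun u _ => (h u v).mul_left _

/-- Let `R` be a DVR of characteristic `2` with uniformizer `π` and
valuation `v`, and `f(x) = x² − ax − b ∈ R[x]` monic irreducible over the fraction
field `K` and separable. Let `m` be the maximal integer in `{0, …, v(a)}` such that
`v(b − r(r + a)) ≥ 2m` for some `r ∈ R`, and fix such an `r`. Then every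
`A ∈ Mat_2(R)` with characteristic polynomial `f` is similar over `R` to exactly one
of the matrices `[[−r, πⁱ],[(b − r(r + a))/πⁱ, a + r]]` with `0 ≤ i ≤ m`. -/
theorem char_two_separable_classification
    (R : Type*) [CommRing R] [IsDomain R] [IsDiscreteValuationRing R] [CharP R 2]
    (K : Type*) [Field K] [Algebra R K] [IsFractionRing R K]
    (π : R) (hπ : Irreducible π)
    (a b : R) (f : R[X]) (hf : f = X ^ 2 - C a * X - C b)
    (hirr : Irreducible (f.map (algebraMap R K)))
    (hsep : (f.map (algebraMap R K)).Separable)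
    (m : ℕ) (hma : π ^ m ∣ a)
    (r : R) (hr : π ^ (2 * m) ∣ (b - r * (r + a)))
    (hmax : ∀ m' : ℕ, π ^ m' ∣ a →
      (∃ r' : R, π ^ (2 * m') ∣ (b - r' * (r' + a))) → m' ≤ m) :
    ∀ A : Matrix (Fin 2) (Fin 2) R, A.charpoly = f →
      ∃! i : ℕ, i ≤ m ∧ ∃ c : R, b - r * (r + a) = π ^ i * c ∧
        ∃ U : (Matrix (Fin 2) (Fin 2) R)ˣ,
          (U : Matrix (Fin 2) (Fin 2) R) * A * (U⁻¹ : _) = !![-r, π ^ i; c, a + r] := by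
  classical
  intro A hA
  have h2 : (2 : R) = 0 := by exact_mod_cast CharP.cast_eq_zero R 2
  have hπp : Prime π := UniqueFactorizationMonoid.irreducible_iff_prime.mp hπ
  have hπ0 : π ≠ 0 := hπp.ne_zero
  have hunit_of_not_dvd : ∀ u : R, ¬ π ∣ u → IsUnit u := by
    intro u hu
    by_contra hnu
    exact hu (by
      rw [← Ideal.mem_span_singleton, ← hπ.maximalIdeal_eq]
      exact IsLocalRing.mem_maximalIdeal u |>.mpr hnu)
  -- trace and determinant
  have htr0 := Matrix.trace_eq_neg_charpoly_coeff A
  have hdet0 := Matrix.det_eq_sign_charpoly_coeff A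
  rw [hA, hf] at htr0 hdet0
  simp [Matrix.trace_fin_two, Matrix.det_fin_two, coeff_X, coeff_C] at htr0 hdet0
  -- htr0 : A 0 0 + A 1 1 = a ; hdet0 : A 0 0 * A 1 1 - A 0 1 * A 1 0 = -b
  have hbr : b - r * (r + a) = A 0 1 * A 1 0 - (A 0 0 + r) * (A 1 1 + r) := by
    linear_combination hdet0 + r * htr0
  -- the key bound
  set P : ℕ → Prop := fun k => π ^ k ∣ (A 0 0 + r) ∧ π ^ k ∣ A 0 1 ∧ π ^ k ∣ A 1 0 ∧
      π ^ k ∣ (A 1 1 + r) with hP_def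
  have claim : ∀ k : ℕ, P k → k ≤ m := by
    rintro k ⟨hkw, hkx, hky, hkz⟩
    refine hmax k ?_ ⟨r, ?_⟩
    · have ha' : a = (A 0 0 + r) + (A 1 1 + r) := by linear_combination -htr0 - r * h2
      rw [ha']; exact dvd_add hkw hkz
    · rw [hbr, two_mul, pow_add]
      exact dvd_sub (mul_dvd_mul hkx hky) (mul_dvd_mul hkw hkz)
  have hP0 : P 0 := by simp [hP_def]
  set i := Nat.findGreatest P m with hi_def
  have hPi : P i := Nat.findGreatest_spec (Nat.zero_le m) hP0
  have hile : i ≤ m := Nat.findGreatest_le m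
  have hnot : ¬ P (i + 1) := by
    intro hcon
    have h1 := Nat.le_findGreatest (claim _ hcon) hcon
    omega
  obtain ⟨w₀, hw⟩ := hPi.1
  obtain ⟨x₀, hx⟩ := hPi.2.1
  obtain ⟨y₀, hy⟩ := hPi.2.2.1
  obtain ⟨z₀, hz⟩ := hPi.2.2.2
  have hA00 : A 0 0 = π ^ i * w₀ - r := by linear_combination hw
  have hA11 : A 1 1 = π ^ i * z₀ - r := by linear_combination hz
  have ha' : a = π ^ i * (w₀ + z₀) := by linear_combination -htr0 - r * h2 + hw + hz
  have hb' : b - r * (r + a) = π ^ (2 * i) * (x₀ * y₀ - w₀ * z₀) := by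
    rw [hbr, hw, hx, hy, hz, two_mul, pow_add]; ring
  -- choose a vector making the quadratic form a unit
  obtain ⟨X, Y, hu⟩ : ∃ X Y : R,
      IsUnit (y₀ * X ^ 2 + (z₀ + w₀) * X * Y + x₀ * Y ^ 2) := by
    by_cases hqx : π ∣ x₀
    · by_cases hqy : π ∣ y₀
      · by_cases hqwz : π ∣ (w₀ + z₀)
        · -- bad case : contradiction with maximality
          exfalso
          have hwz : ¬ (π ∣ w₀ ∧ π ∣ z₀) := by
            rintro ⟨hw1, hz1⟩
            refine hnot ⟨?_, ?_, ?_, ?_⟩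
            · rw [hw, pow_succ]; exact mul_dvd_mul (dvd_refl _) hw1
            · rw [hx, pow_succ]; exact mul_dvd_mul (dvd_refl _) hqx
            · rw [hy, pow_succ]; exact mul_dvd_mul (dvd_refl _) hqy
            · rw [hz, pow_succ]; exact mul_dvd_mul (dvd_refl _) hz1
          have hw1 : ¬ π ∣ w₀ := fun h =>
            hwz ⟨h, (dvd_add_right h).mp hqwz⟩
          have hz1 : ¬ π ∣ z₀ := fun h =>
            hwz ⟨by have := (dvd_add_left h).mp hqwz; exact this, h⟩
          have hd1 : ¬ π ∣ (x₀ * y₀ - w₀ * z₀) := by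
            intro h
            have : π ∣ w₀ * z₀ := by
              have := dvd_sub (hqx.mul_right y₀) h
              simpa using this
            rcases hπp.dvd_mul.mp this with h' | h'
            exacts [hw1 h', hz1 h']
          have him : i = m := by
            rcases Nat.lt_or_ge i m with hlt | hge
            · exfalso
              have hdd : π ^ (2 * i) * π ∣ π ^ (2 * i) * (x₀ * y₀ - w₀ * z₀) := by
                rw [← pow_succ, ← hb']
                exact dvd_trans (pow_dvd_pow π (by omega)) hr
              exact hd1 ((mul_dvd_mul_iff_left (pow_ne_zero _ hπ0)).mp hdd)
            · omega
          refine absurd (hmax (i + 1) ?_ ⟨r + a + π ^ i * z₀, ?_⟩) (by omega)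
          · rw [ha', pow_succ]
            exact mul_dvd_mul (dvd_refl _) hqwz
          · have key : b - (r + a + π ^ i * z₀) * ((r + a + π ^ i * z₀) + a)
                  = (π ^ i * x₀) * (π ^ i * y₀) := by
                linear_combination hb' + (-2*r - 2*a - 3*(π ^ i)*z₀) * ha' +
                  (-(2*r*(π ^ i)*z₀) - r*(π ^ i)*w₀ - a*(π ^ i)*w₀ - a*(π ^ i)*z₀
                    - 2*(π ^ i)^2*z₀^2 - 2*(π ^ i)^2*w₀*z₀) * h2
            rw [key, two_mul, pow_add]
            exact mul_dvd_mul (by rw [pow_succ]; exact mul_dvd_mul (dvd_refl _) hqx)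
              (by rw [pow_succ]; exact mul_dvd_mul (dvd_refl _) hqy)
        · refine ⟨1, 1, hunit_of_not_dvd _ fun h => hqwz ?_⟩
          have h1 : y₀ * 1 ^ 2 + (z₀ + w₀) * 1 * 1 + x₀ * 1 ^ 2 - y₀ * 1 ^ 2
              - x₀ * 1 ^ 2 = w₀ + z₀ := by ring
          rw [← h1]
          exact dvd_sub (dvd_sub h (hqy.mul_right _)) (hqx.mul_right _)
      · exact ⟨1, 0, hunit_of_not_dvd _ (by simpa using hqy)⟩
    · exact ⟨0, 1, hunit_of_not_dvd _ (by simpa using hqx)⟩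
  -- the conjugating matrix
  set V : Matrix (Fin 2) (Fin 2) R :=
    !![z₀ * X + x₀ * Y, X; y₀ * X + w₀ * Y, Y] with hV_def
  have hVdet : IsUnit V.det := by
    have : V.det = y₀ * X ^ 2 + (z₀ + w₀) * X * Y + x₀ * Y ^ 2 := by
      rw [hV_def, Matrix.det_fin_two_of]
      linear_combination (-(y₀ * X ^ 2) - w₀ * X * Y) * h2
    rw [this]; exact hu
  have hVu : IsUnit V := (Matrix.isUnit_iff_isUnit_det V).mpr hVdet
  set M : Matrix (Fin 2) (Fin 2) R :=
    !![-r, π ^ i; π ^ i * (x₀ * y₀ - w₀ * z₀), a + r] with hM_def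
  have hAV : A * V = V * M := by
    rw [Matrix.eta_fin_two A, hA00, hA11, hV_def, hM_def]
    have hA01 : A 0 1 = π ^ i * x₀ := hx
    have hA10 : A 1 0 = π ^ i * y₀ := hy
    rw [hA01, hA10]
    ext k l
    fin_cases k <;> fin_cases l <;>
      simp only [Matrix.mul_apply, Fin.sum_univ_two, Matrix.cons_val', Matrix.cons_val_zero,
        Matrix.cons_val_one, Matrix.head_cons, Matrix.head_fin_const, Matrix.empty_val',
        Matrix.cons_val_fin_one, Matrix.of_apply, Fin.mk_zero, Fin.mk_one, Fin.isValue]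
    · linear_combination (π ^ i * (w₀ * z₀ * X + w₀ * x₀ * Y)) * h2
    · linear_combination (-X) * ha' + (-(π ^ i * z₀ * X) - r * X) * h2
    · linear_combination (π ^ i * (y₀ * z₀ * X + z₀ * w₀ * Y)) * h2
    · linear_combination (-Y) * ha' + (-(π ^ i * w₀ * Y) - r * Y) * h2
  have hb'' : b - r * (r + a) = π ^ i * (π ^ i * (x₀ * y₀ - w₀ * z₀)) := by
    rw [hb', two_mul, pow_add, mul_assoc]
  refine ⟨i, ⟨hile, π ^ i * (x₀ * y₀ - w₀ * z₀), hb'', hVu.unit⁻¹, ?_⟩, ?_⟩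
  · rw [inv_inv]
    calc (↑hVu.unit⁻¹ : Matrix (Fin 2) (Fin 2) R) * A * ↑hVu.unit
        = ↑hVu.unit⁻¹ * (A * V) := by rw [hVu.unit_spec, mul_assoc]
      _ = ↑hVu.unit⁻¹ * (↑hVu.unit * M) := by rw [hAV, hVu.unit_spec]
      _ = M := by rw [← mul_assoc, Units.inv_mul, one_mul]
  · -- uniqueness
    rintro j ⟨hjle, cj, hcj, U, hU⟩
    have hcj' : π ^ j ∣ cj := by
      have h1 : π ^ j * π ^ j ∣ π ^ j * cj := by
        rw [← hcj, ← pow_add]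
        exact dvd_trans (pow_dvd_pow π (by omega)) hr
      exact (mul_dvd_mul_iff_left (pow_ne_zero j hπ0)).mp h1
    have hja : π ^ j ∣ a := dvd_trans (pow_dvd_pow π hjle) hma
    have hMr : !![-r, π ^ j; cj, a + r] + r • (1 : Matrix (Fin 2) (Fin 2) R)
        = !![0, π ^ j; cj, a + 2 * r] := by
      ext k l
      fin_cases k <;> fin_cases l <;> simp [Matrix.one_apply] <;> ring
    have hN : ∀ k l : Fin 2,
        π ^ j ∣ (!![(0 : R), π ^ j; cj, a + 2 * r] : Matrix (Fin 2) (Fin 2) R) k l := by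
      intro k l
      fin_cases k <;> fin_cases l
      · simp
      · simp
      · simpa using hcj'
      · have h3 : a + 2 * r = a := by rw [h2]; ring
        simpa [h3] using hja
    set Uc : Matrix (Fin 2) (Fin 2) R := (U : Matrix (Fin 2) (Fin 2) R) with hUc
    set Ui : Matrix (Fin 2) (Fin 2) R :=
      ((U⁻¹ : (Matrix (Fin 2) (Fin 2) R)ˣ) : Matrix (Fin 2) (Fin 2) R) with hUi
    have hui : Ui * Uc = 1 := U.inv_mul
    have hui' : Uc * Ui = 1 := U.mul_inv
    have hUA : Uc * A = !![-r, π ^ j; cj, a + r] * Uc := by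
      rw [← hU, mul_assoc (Uc * A) Ui Uc, hui, mul_one]
    have hA2 : A = Ui * !![-r, π ^ j; cj, a + r] * Uc := by
      rw [mul_assoc, ← hUA, ← mul_assoc, hui, one_mul]
    have key1 : A + r • (1 : Matrix (Fin 2) (Fin 2) R)
        = Ui * !![0, π ^ j; cj, a + 2 * r] * Uc := by
      rw [← hMr, mul_add, add_mul, ← hA2]
      congr 1
      rw [mul_smul_comm, mul_one, smul_mul_assoc, hui]
    have hjw : ∀ k l, π ^ j ∣ (A + r • (1 : Matrix (Fin 2) (Fin 2) R)) k l := by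
      intro k l; rw [key1]; exact dvd_entries_mul' _ _ _ _ hN k l
    have hj00 : π ^ j ∣ A 0 0 + r := by simpa [Matrix.one_apply] using hjw 0 0
    have hj01 : π ^ j ∣ A 0 1 := by simpa [Matrix.one_apply] using hjw 0 1
    have hj10 : π ^ j ∣ A 1 0 := by simpa [Matrix.one_apply] using hjw 1 0
    have hj11 : π ^ j ∣ A 1 1 + r := by simpa [Matrix.one_apply] using hjw 1 1
    have hji : j ≤ i := by
      by_contra hc
      push_neg at hc
      exact hnot ⟨dvd_trans (pow_dvd_pow π (by omega)) hj00,
        dvd_trans (pow_dvd_pow π (by omega)) hj01,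
        dvd_trans (pow_dvd_pow π (by omega)) hj10,
        dvd_trans (pow_dvd_pow π (by omega)) hj11⟩
    have hMj2 : !![(0 : R), π ^ j; cj, a + 2 * r] = Uc * (A + r • 1) * Ui := by
      rw [mul_add, add_mul, hU, ← hMr]
      congr 1
      rw [mul_smul_comm, mul_one, smul_mul_assoc, hui']
    have hiA : ∀ k l, π ^ i ∣ (A + r • (1 : Matrix (Fin 2) (Fin 2) R)) k l := by
      intro k l
      fin_cases k <;> fin_cases l
      · simpa [Matrix.one_apply] using hPi.1
      · simpa [Matrix.one_apply] using hPi.2.1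
      · simpa [Matrix.one_apply] using hPi.2.2.1
      · simpa [Matrix.one_apply] using hPi.2.2.2
    have hij : π ^ i ∣ π ^ j := by
      have h := dvd_entries_mul' (π ^ i) Uc (A + r • 1) Ui hiA 0 1
      rw [← hMj2] at h
      simpa using h
    have hij' : i ≤ j := by
      by_contra hc
      push_neg at hc
      obtain ⟨e, he⟩ := hij
      have h1 : π ^ j * 1 = π ^ j * (π ^ (i - j) * e) := by
        rw [mul_one, ← mul_assoc, ← pow_add, Nat.add_sub_cancel' (le_of_lt hc), ← he]
      have h1' := mul_left_cancel₀ (pow_ne_zero j hπ0) h1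
      have hd : i - j = (i - j - 1) + 1 := by omega
      rw [hd, pow_succ] at h1'
      exact hπ.not_isUnit (IsUnit.of_mul_eq_one (a := π) (π ^ (i - j - 1) * e)
        (by linear_combination -h1'))
    omega
end
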